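/- Under the MDP with Bernoulli treatments and the regularity assumptions, there is a constant K depending only on B and C such that for every i and every γ ∈ (0,1): | E_{μ(π_i=γ, π_{−i})}[Y_i] − E_{μ(π)}[a_i(Z_i) + b_i(Z_i)·γ] / E_{μ(π)}[1 − c_i(Z_i) − d_i(Z_i)·γ] | ≤ K·√(L_n), where Z_i = Σ_{j∈𝒩_i} Y_j, μ(π) is the stationary distribution of the chain with treatment probabilities π, and μ(π_i=γ, π_{−i}) is the stationary distribution of the chain in which the i-th treatment probability is replaced by γ. -/

import Mathlib

open Finset Filter Topology

noncomputable section

namespace MRT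

/-- The state space: binary outcomes for each of the `n` units. -/
abbrev State (n : ℕ) := Fin n → Bool

variable {n : ℕ}

/-- `zc Nbr y i` is `Z_i(y) = ∑_{j ∈ 𝒩_i} y_j`, the number of active neighbors of `i`. -/
def zc (Nbr : Fin n → Finset (Fin n)) (y : State n) (i : Fin n) : ℝ :=
  ∑ j ∈ Nbr i, (if y j then (1 : ℝ) else 0)

/-- Probability that coordinate `i` is `1` at the next step, starting from state `y`,
under Bernoulli(π i) treatments. -/
def succProb (Nbr : Fin n → Finset (Fin n)) (f : Fin n → Bool → Bool → ℝ → ℝ)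
    (π : Fin n → ℝ) (y : State n) (i : Fin n) : ℝ :=
  π i * f i (y i) true (zc Nbr y i) + (1 - π i) * f i (y i) false (zc Nbr y i)

/-- Transition kernel `P(π)` of the MDP with Bernoulli treatments. -/
def kernel (Nbr : Fin n → Finset (Fin n)) (f : Fin n → Bool → Bool → ℝ → ℝ)
    (π : Fin n → ℝ) (y y' : State n) : ℝ :=
  ∏ i, if y' i then succProb Nbr f π y i else 1 - succProb Nbr f π y i

/-- One-step pushforward `ν P(π)` of a distribution `ν` under the kernel. -/
def step (Nbr : Fin n → Finset (Fin n)) (f : Fin n → Bool → Bool → ℝ → ℝ)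
    (π : Fin n → ℝ) (ν : State n → ℝ) : State n → ℝ :=
  fun y' => ∑ y, ν y * kernel Nbr f π y y'

/-- `ν` is a probability distribution on `{0,1}^n`. -/
def IsDist (ν : State n → ℝ) : Prop := (∀ y, 0 ≤ ν y) ∧ ∑ y, ν y = 1

/-- `μ` is a stationary probability distribution for the kernel. -/
def IsStationary (Nbr : Fin n → Finset (Fin n)) (f : Fin n → Bool → Bool → ℝ → ℝ)
    (π : Fin n → ℝ) (μ : State n → ℝ) : Prop :=
  IsDist μ ∧ step Nbr f π μ = μ

/-- Expectation of `g` under the (finitely supported) distribution `ν`. -/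
def expect (ν : State n → ℝ) (g : State n → ℝ) : ℝ := ∑ y, ν y * g y

/-- `γ` is a coupling of `ν₁` and `ν₂`. -/
def IsCoupling (γ : State n × State n → ℝ) (ν₁ ν₂ : State n → ℝ) : Prop :=
  (∀ p, 0 ≤ γ p) ∧ (∀ x, ∑ y, γ (x, y) = ν₁ x) ∧ (∀ y, ∑ x, γ (x, y) = ν₂ y)

/-- `∑ i |x_i - y_i|` for binary vectors. -/
def hamming (x y : State n) : ℝ := ∑ i : Fin n, (if x i = y i then (0:ℝ) else 1)

/-- The `L1`-Wasserstein distance between two distributions on `{0,1}^n`. -/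
def WL1 (ν₁ ν₂ : State n → ℝ) : ℝ :=
  sInf {c | ∃ γ, IsCoupling γ ν₁ ν₂ ∧ c = ∑ p : State n × State n, γ p * hamming p.1 p.2}

/-- `∑_{j ∈ 𝒩_i} |x_j - y_j|` for binary vectors. -/
def nbrDiff (Nbr : Fin n → Finset (Fin n)) (i : Fin n) (x y : State n) : ℝ :=
  ∑ j ∈ Nbr i, (if x j = y j then (0:ℝ) else 1)

/-- The graph-dependent Wasserstein distance `W_{d_{E,k}}`. -/
def WdE (Nbr : Fin n → Finset (Fin n)) (k : ℕ) (ν₁ ν₂ : State n → ℝ) : ℝ :=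
  sInf {c | ∃ γ, IsCoupling γ ν₁ ν₂ ∧
    c = ⨆ i : Fin n,
      (∑ p : State n × State n, γ p * (nbrDiff Nbr i p.1 p.2) ^ k) ^ ((k : ℝ)⁻¹)}

/-- Multilinear extension of `f i` to probabilities `p, w ∈ [0,1]`:
`f_i(p,w,z) = a_i(z) + b_i(z) w + c_i(z) p + d_i(z) w p`. -/
def fext (f : Fin n → Bool → Bool → ℝ → ℝ) (i : Fin n) (p w z : ℝ) : ℝ :=
  f i false false z + (f i false true z - f i false false z) * w +
    (f i true false z - f i false false z) * p +
    (f i true true z - f i false true z - f i true false z + f i false false z) * w * p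

/-- `Q_i = ∑_{j ∈ 𝒩_i} P_j`. -/
def mfQ (Nbr : Fin n → Finset (Fin n)) (P : Fin n → ℝ) (i : Fin n) : ℝ := ∑ j ∈ Nbr i, P j

/-- One step of the mean-field dynamical system. -/
def mfStep (Nbr : Fin n → Finset (Fin n)) (f : Fin n → Bool → Bool → ℝ → ℝ)
    (π : Fin n → ℝ) (P : Fin n → ℝ) : Fin n → ℝ :=
  fun i => fext f i (P i) (π i) (mfQ Nbr P i)

/-- `P` is a fixed point of the mean-field dynamical system, lying in `[0,1]^n`. -/
def IsMFFixed (Nbr : Fin n → Finset (Fin n)) (f : Fin n → Bool → Bool → ℝ → ℝ)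
    (π : Fin n → ℝ) (P : Fin n → ℝ) : Prop :=
  (∀ i, P i ∈ Set.Icc (0:ℝ) 1) ∧ mfStep Nbr f π P = P

/-- Law of a vector of independent Bernoulli(P i) coordinates. -/
def prodLaw (P : Fin n → ℝ) (y : State n) : ℝ := ∏ i, if y i then P i else 1 - P i

/-- Probability of the treatment vector `w` under independent Bernoulli(π i). -/
def wProb (π : Fin n → ℝ) (w : State n) : ℝ := ∏ i, if w i then π i else 1 - π i

/-- Conditional probability of the next state `y'` given state `y` and treatments `w`. -/
def condProb (Nbr : Fin n → Finset (Fin n)) (f : Fin n → Bool → Bool → ℝ → ℝ)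
    (y w y' : State n) : ℝ :=
  ∏ i, if y' i then f i (y i) (w i) (zc Nbr y i) else 1 - f i (y i) (w i) (zc Nbr y i)

/-- Probability of the trajectory `(Y_1, …, Y_{T+1}; W_1, …, W_T)` (indexed from `0` in Lean)
of the MDP with Bernoulli treatments, with initial distribution `ν₀`. -/
def trajProb (Nbr : Fin n → Finset (Fin n)) (f : Fin n → Bool → Bool → ℝ → ℝ)
    (π : Fin n → ℝ) (T : ℕ) (ν₀ : State n → ℝ)
    (Y : Fin (T + 1) → State n) (W : Fin T → State n) : ℝ :=
  ν₀ (Y 0) * ∏ t : Fin T, wProb π (W t) * condProb Nbr f (Y t.castSucc) (W t) (Y t.succ)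

/-- The estimator `f̂_i(y,w)` computed from the trajectory (convention `0/0 = 0`,
which is Lean's division). -/
def fhat {T : ℕ} (Y : Fin (T + 1) → State n) (W : Fin T → State n)
    (i : Fin n) (y w : Bool) : ℝ :=
  (∑ t : Fin T, if Y t.castSucc i = y ∧ W t i = w then (if Y t.succ i then (1:ℝ) else 0) else 0) /
  (∑ t : Fin T, if Y t.castSucc i = y ∧ W t i = w then (1:ℝ) else 0)

/-- The undirected-graph structure: symmetric neighborhoods without self-loops. -/
def GoodGraph (Nbr : Fin n → Finset (Fin n)) : Prop :=
  (∀ i j, i ∈ Nbr j ↔ j ∈ Nbr i) ∧ ∀ i, i ∉ Nbr i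

/-- `f` takes values strictly between 0 and 1. -/
def PosF (f : Fin n → Bool → Bool → ℝ → ℝ) : Prop :=
  ∀ i y w z, 0 ≤ z → f i y w z ∈ Set.Ioo (0:ℝ) 1

/-- The regularity assumptions: `L`-Lipschitzness in the third argument, the bound `B` on
the effect of the first argument, maximal degree `D`, and the contraction condition
`B + L·D ≤ C < 1`. -/
def Regular (Nbr : Fin n → Finset (Fin n)) (f : Fin n → Bool → Bool → ℝ → ℝ)
    (L B : ℝ) (D : ℕ) (C : ℝ) : Prop :=
  0 ≤ L ∧
  (∀ i y w z₁ z₂, 0 ≤ z₁ → 0 ≤ z₂ → |f i y w z₁ - f i y w z₂| ≤ L * |z₁ - z₂|) ∧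
  (∀ i w z, 0 ≤ z → |f i true w z - f i false w z| ≤ B) ∧
  (∀ i, (Nbr i).card ≤ D) ∧
  B + L * D ≤ C ∧ C < 1

/-- Adjacency matrix of the interference graph. -/
def adjMat (Nbr : Fin n → Finset (Fin n)) : Matrix (Fin n) (Fin n) ℝ :=
  Matrix.of fun i j => if j ∈ Nbr i then (1:ℝ) else 0


/-- Indicator of `Y_i = 1` as a real-valued function of the state. -/
def Yi (i : Fin n) (s : State n) : ℝ := if s i then 1 else 0

/-- `a_i(z) = f_i(0,0,z)`. -/
def aF (f : Fin n → Bool → Bool → ℝ → ℝ) (i : Fin n) (z : ℝ) : ℝ := f i false false z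

/-- `b_i(z) = f_i(0,1,z) - f_i(0,0,z)`. -/
def bF (f : Fin n → Bool → Bool → ℝ → ℝ) (i : Fin n) (z : ℝ) : ℝ :=
  f i false true z - f i false false z

/-- `c_i(z) = f_i(1,0,z) - f_i(0,0,z)`. -/
def cF (f : Fin n → Bool → Bool → ℝ → ℝ) (i : Fin n) (z : ℝ) : ℝ :=
  f i true false z - f i false false z

/-- `d_i(z) = f_i(1,1,z) - f_i(0,1,z) - f_i(1,0,z) + f_i(0,0,z)`. -/
def dF (f : Fin n → Bool → Bool → ℝ → ℝ) (i : Fin n) (z : ℝ) : ℝ :=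
  f i true true z - f i false true z - f i true false z + f i false false z

/-- `â_i` computed from the trajectory. -/
def ahat {T : ℕ} (Y : Fin (T + 1) → State n) (W : Fin T → State n) (i : Fin n) : ℝ :=
  fhat Y W i false false

/-- `b̂_i` computed from the trajectory. -/
def bhat {T : ℕ} (Y : Fin (T + 1) → State n) (W : Fin T → State n) (i : Fin n) : ℝ :=
  fhat Y W i false true - fhat Y W i false false

/-- `ĉ_i` computed from the trajectory. -/
def chat {T : ℕ} (Y : Fin (T + 1) → State n) (W : Fin T → State n) (i : Fin n) : ℝ :=
  fhat Y W i true false - fhat Y W i false false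

/-- `d̂_i` computed from the trajectory. -/
def dhat {T : ℕ} (Y : Fin (T + 1) → State n) (W : Fin T → State n) (i : Fin n) : ℝ :=
  fhat Y W i true true + fhat Y W i false false - fhat Y W i false true - fhat Y W i true false

/-- The plug-in estimator `τ̂_LDE(γ₁, γ₂)` of the long-term direct effect. -/
def ldeHat {T : ℕ} (Y : Fin (T + 1) → State n) (W : Fin T → State n) (γ₁ γ₂ : ℝ) : ℝ :=
  (1 / (n : ℝ)) * ∑ i : Fin n,
    ((ahat Y W i + bhat Y W i * γ₁) / (1 - chat Y W i - dhat Y W i * γ₁) -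
      (ahat Y W i + bhat Y W i * γ₂) / (1 - chat Y W i - dhat Y W i * γ₂))

/-- `P̂_i = (1/T) ∑_{t=1}^T Y_{it}`. -/
def Phat {T : ℕ} (Y : Fin (T + 1) → State n) (i : Fin n) : ℝ :=
  (∑ t : Fin T, if Y t.castSucc i then (1 : ℝ) else 0) / T

/-- The regression estimator `f̂'_i(y,w)_{δ_T}` of the derivative of `f_i` in its third
argument, computed from the trajectory (`Dr` is the degree bound `D_n`, `δ` is `δ_T`). -/
def fhatD (Nbr : Fin n → Finset (Fin n)) {T : ℕ}
    (Y : Fin (T + 1) → State n) (W : Fin T → State n)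
    (i : Fin n) (y w : Bool) (Dr δ : ℝ) : ℝ :=
  let ind : Fin T → ℝ := fun t => if Y t.castSucc i = y ∧ W t i = w then 1 else 0
  let cnt : ℝ := ∑ t, ind t
  let Ybar : ℝ := (∑ t, ind t * (if Y t.succ i then (1 : ℝ) else 0)) / cnt
  let Zbar : ℝ := (∑ t, ind t * zc Nbr (Y t.castSucc) i) / cnt
  (∑ t, ind t * ((if Y t.succ i then (1 : ℝ) else 0) - Ybar) * (zc Nbr (Y t.castSucc) i - Zbar)) /
    max (Dr * T * δ) (∑ t, ind t * (zc Nbr (Y t.castSucc) i - Zbar) ^ 2)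

/-- The plug-in estimator `τ̂_LTE(π + Δv, π)/Δ = (1/n)·𝟙ᵀ(M_η − D̂A − Ŵ_κ)⁻¹ û`
of the (rescaled) long-term total effect. -/
def lteHatOverDelta (Nbr : Fin n → Finset (Fin n)) (π v : Fin n → ℝ) {T : ℕ}
    (Y : Fin (T + 1) → State n) (W : Fin T → State n) (Dn : ℕ) (δ η κ : ℝ) : ℝ :=
  let Dh : Fin n → ℝ := fun i =>
    (1 - π i) * (1 - Phat Y i) * fhatD Nbr Y W i false false Dn δ +
      π i * (1 - Phat Y i) * fhatD Nbr Y W i false true Dn δ +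
      Phat Y i * (1 - π i) * fhatD Nbr Y W i true false Dn δ +
      Phat Y i * π i * fhatD Nbr Y W i true true Dn δ
  let ω : Fin n → ℝ := fun i => min (1 - κ) (chat Y W i + dhat Y W i * π i)
  let u : Fin n → ℝ := fun i => (bhat Y W i + dhat Y W i * Phat Y i) * v i
  let Mη : Matrix (Fin n) (Fin n) ℝ :=
    Matrix.diagonal fun i => max 1 (Dh i * Dn / (1 - η) + ω i)
  (1 / (n : ℝ)) *
    ∑ i : Fin n, ((Mη - Matrix.diagonal Dh * adjMat Nbr - Matrix.diagonal ω)⁻¹.mulVec u) i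

end MRT


end

noncomputable section
namespace LDE
open MRT Finset

variable {n : ℕ}

/-- disagreement indicator -/
def dd (x y : State n) (l : Fin n) : ℝ := if x l = y l then 0 else 1

lemma dd_nonneg (x y : State n) (l : Fin n) : 0 ≤ dd x y l := by
  unfold dd; split <;> norm_num

lemma dd_le_one (x y : State n) (l : Fin n) : dd x y l ≤ 1 := by
  unfold dd; split <;> norm_num

/-- coordinatewise Lipschitz property -/
def LipV (h : State n → ℝ) (c : Fin n → ℝ) : Prop :=
  ∀ x y : State n, |h x - h y| ≤ ∑ l, c l * dd x y l

/-- function does not depend on coordinate `i` -/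
def Indep (i : Fin n) (h : State n → ℝ) : Prop :=
  ∀ y b, h (Function.update y i b) = h y

def flipc (j : Fin n) (y : State n) : State n := Function.update y j (!(y j))

lemma flipc_invol (j : Fin n) : Function.Involutive (flipc j) := by
  intro y; funext l
  by_cases h : l = j
  · subst h; simp [flipc]
  · simp [flipc, Function.update_of_ne h]

lemma sum_flip (j : Fin n) (F : State n → ℝ) : ∑ y, F (flipc j y) = ∑ y, F y :=
  Equiv.sum_comp ((flipc_invol j).toPerm _) F

lemma flipc_apply_self (j : Fin n) (y : State n) : flipc j y j = !(y j) := by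
  simp [flipc]

lemma S2 (j : Fin n) (F : State n → ℝ) :
    ∑ y, F y = ∑ y, (if y j = true then F y + F (Function.update y j false) else 0) := by
  have h1 : ∑ y, F y
      = ∑ y : State n, ((if y j = true then F y else 0) + (if y j = true then 0 else F y)) := by
    apply Finset.sum_congr rfl; intro y _; by_cases h : y j = true <;> simp [h]
  have h2 : ∑ y : State n, (if y j = true then 0 else F y)
      = ∑ y : State n, (if y j = true then F (Function.update y j false) else 0) := by
    rw [← sum_flip j (fun y => if y j = true then (0:ℝ) else F y)]
    apply Finset.sum_congr rfl; intro y _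
    by_cases h : y j = true
    · simp [flipc, h]
    · simp only [Bool.not_eq_true] at h
      simp [flipc, h]
  rw [h1, Finset.sum_add_distrib, h2, ← Finset.sum_add_distrib]
  apply Finset.sum_congr rfl; intro y _
  by_cases h : y j = true <;> simp [h]

lemma S1 (j : Fin n) (Φ : State n → ℝ) (hΦ : ∀ y b, Φ (Function.update y j b) = Φ y) :
    ∑ y, (if y j = true then Φ y else 0) = (∑ y, Φ y) / 2 := by
  have h := S2 j Φ
  have h2 : ∑ y : State n, (if y j = true then Φ y + Φ (Function.update y j false) else 0)
      = ∑ y : State n, (if y j = true then 2 * Φ y else 0) := by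
    apply Finset.sum_congr rfl; intro y _
    by_cases h : y j = true <;> simp [h, hΦ y false, two_mul]
  rw [h2] at h
  have h3 : ∑ y : State n, (if y j = true then 2 * Φ y else 0)
      = 2 * ∑ y : State n, (if y j = true then Φ y else 0) := by
    rw [Finset.mul_sum]; apply Finset.sum_congr rfl; intro y _
    by_cases h : y j = true <;> simp [h]
  rw [h3] at h
  linarith

lemma prodLaw_sum (p : Fin n → ℝ) : ∑ y : State n, prodLaw p y = 1 := by
  unfold prodLaw
  rw [← Fintype.prod_sum (fun i (b : Bool) => if b then p i else 1 - p i)]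
  simp

lemma prodLaw_nonneg {p : Fin n → ℝ} (hp : ∀ i, 0 ≤ p i ∧ p i ≤ 1) (y : State n) :
    0 ≤ prodLaw p y := by
  unfold prodLaw
  apply Finset.prod_nonneg
  intro i _
  rcases hp i with ⟨h0, h1⟩
  split <;> linarith

lemma prodLaw_isDist {p : Fin n → ℝ} (hp : ∀ i, 0 ≤ p i ∧ p i ≤ 1) :
    IsDist (prodLaw p) := ⟨prodLaw_nonneg hp, prodLaw_sum p⟩

end LDE
end
noncomputable section
namespace LDE
open MRT Finset

variable {n : ℕ}

/-- one-coordinate averaging operator -/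
def Tj (p : Fin n → ℝ) (j : Fin n) (h : State n → ℝ) : State n → ℝ :=
  fun y => p j * h (Function.update y j true) + (1 - p j) * h (Function.update y j false)

def maskP (p : Fin n → ℝ) (s : Finset (Fin n)) : Fin n → ℝ :=
  fun l => if l ∈ s then p l else 1/2

def mrg (s : Finset (Fin n)) (z y : State n) : State n :=
  fun l => if l ∈ s then z l else y l

/-- partial averaging over the coordinates in `s` -/
def Av (p : Fin n → ℝ) (s : Finset (Fin n)) (h : State n → ℝ) : State n → ℝ :=
  fun y => ∑ z, prodLaw (maskP p s) z * h (mrg s z y)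

def Wr (q : Fin n → ℝ) (j : Fin n) (z : State n) : ℝ :=
  ∏ l ∈ univ.erase j, (if z l then q l else 1 - q l)

lemma prodLaw_factor (q : Fin n → ℝ) (j : Fin n) (z : State n) :
    prodLaw q z = (if z j then q j else 1 - q j) * Wr q j z := by
  unfold prodLaw Wr
  exact (Finset.mul_prod_erase univ _ (mem_univ j)).symm

lemma Wr_update (q : Fin n → ℝ) (j : Fin n) (z : State n) (b : Bool) :
    Wr q j (Function.update z j b) = Wr q j z := by
  unfold Wr
  apply Finset.prod_congr rfl
  intro l hl
  rw [Function.update_of_ne (Finset.ne_of_mem_erase hl)]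

lemma Wr_congr {q q' : Fin n → ℝ} (j : Fin n) (hq : ∀ l, l ≠ j → q l = q' l) (z : State n) :
    Wr q j z = Wr q' j z := by
  unfold Wr
  apply Finset.prod_congr rfl
  intro l hl
  rw [hq l (Finset.ne_of_mem_erase hl)]

lemma mrg_empty (z y : State n) : mrg ∅ z y = y := by
  funext l; simp [mrg]

lemma mrg_univ (z y : State n) : mrg univ z y = z := by
  funext l; simp [mrg]

lemma maskP_univ (p : Fin n → ℝ) : maskP p univ = p := by
  funext l; simp [maskP]

lemma mrg_insert {s : Finset (Fin n)} {j : Fin n} (hj : j ∉ s) (z y : State n) :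
    mrg (insert j s) z y = Function.update (mrg s z y) j (z j) := by
  funext l
  by_cases h : l = j
  · subst h; simp [mrg]
  · simp [mrg, Function.update_of_ne h, Finset.mem_insert, h]

lemma mrg_update_z {s : Finset (Fin n)} {j : Fin n} (hj : j ∉ s) (z y : State n) (b : Bool) :
    mrg s (Function.update z j b) y = mrg s z y := by
  funext l
  by_cases h : l = j
  · subst h; simp [mrg, fun hh => hj hh]
  · simp [mrg, Function.update_of_ne h]

lemma mrg_update_y {s : Finset (Fin n)} {j : Fin n} (hj : j ∉ s) (z y : State n) (b : Bool) :
    mrg s z (Function.update y j b) = Function.update (mrg s z y) j b := by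
  funext l
  by_cases h : l = j
  · subst h; simp [mrg, fun hh => hj hh]
  · simp [mrg, Function.update_of_ne h]

lemma Av_empty (p : Fin n → ℝ) (h : State n → ℝ) : Av p ∅ h = h := by
  funext y
  unfold Av
  have : ∀ z : State n, prodLaw (maskP p ∅) z * h (mrg ∅ z y) = prodLaw (maskP p ∅) z * h y := by
    intro z; rw [mrg_empty]
  rw [Finset.sum_congr rfl (fun z _ => this z), ← Finset.sum_mul, prodLaw_sum, one_mul]

lemma Av_univ (p : Fin n → ℝ) (h : State n → ℝ) (y : State n) :
    Av p univ h y = MRT.expect (prodLaw p) h := by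
  unfold Av MRT.expect
  rw [maskP_univ]
  apply Finset.sum_congr rfl
  intro z _
  rw [mrg_univ]

lemma Av_insert (p : Fin n → ℝ) {s : Finset (Fin n)} {j : Fin n} (hj : j ∉ s)
    (h : State n → ℝ) : Av p (insert j s) h = Tj p j (Av p s h) := by
  funext y
  set w := maskP p s with hw
  set Φ : State n → ℝ := fun z =>
    Wr w j z * (p j * h (Function.update (mrg s z y) j true)
      + (1 - p j) * h (Function.update (mrg s z y) j false)) with hΦdef
  have hΦinv : ∀ z b, Φ (Function.update z j b) = Φ z := by
    intro z b
    simp only [hΦdef]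
    rw [Wr_update, mrg_update_z hj]
  -- mask agreement off j
  have hmask : ∀ l, l ≠ j → maskP p (insert j s) l = w l := by
    intro l hl
    simp only [maskP, hw, Finset.mem_insert]
    by_cases h2 : l ∈ s <;> simp [h2, hl]
  have hmaskj : maskP p (insert j s) j = p j := by simp [maskP]
  -- LHS
  have key : ∀ z : State n, z j = true →
      prodLaw (maskP p (insert j s)) z * h (mrg (insert j s) z y)
        + prodLaw (maskP p (insert j s)) (Function.update z j false)
          * h (mrg (insert j s) (Function.update z j false) y) = Φ z := by
    intro z hz
    rw [prodLaw_factor _ j, prodLaw_factor _ j, Wr_congr j hmask, Wr_congr j hmask,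
      Wr_update, mrg_insert hj, mrg_insert hj, mrg_update_z hj]
    simp only [hz, Function.update_self, hmaskj, if_true, if_false, Bool.false_eq_true]
    rw [hΦdef]
    ring
  have lhs_eq : Av p (insert j s) h y = (∑ z, Φ z) / 2 := by
    unfold Av
    rw [S2 j (fun z => prodLaw (maskP p (insert j s)) z * h (mrg (insert j s) z y))]
    rw [← S1 j Φ hΦinv]
    apply Finset.sum_congr rfl
    intro z _
    by_cases hz : z j = true
    · simp only [hz, if_true]
      exact key z hz
    · simp [hz]
  -- RHS
  have wsz : ∀ z : State n, prodLaw w z = 1/2 * Wr w j z := by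
    intro z
    rw [prodLaw_factor w j]
    have : w j = 1/2 := by simp [hw, maskP, hj]
    rw [this]
    have h2 : (1:ℝ) - 1/2 = 1/2 := by norm_num
    rw [h2, ite_self]
  have rhs_eq : Tj p j (Av p s h) y = (∑ z, Φ z) / 2 := by
    unfold Tj Av
    rw [Finset.mul_sum, Finset.mul_sum, ← Finset.sum_add_distrib]
    rw [Finset.sum_div]
    apply Finset.sum_congr rfl
    intro z _
    rw [mrg_update_y hj, mrg_update_y hj, wsz z, hΦdef]
    ring
  rw [lhs_eq, rhs_eq]

end LDE
end
noncomputable section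
namespace LDE
open MRT Finset

variable {n : ℕ}

/-! ### expectation utilities -/

lemma expect_add (ν g u : State n → ℝ) :
    MRT.expect ν (fun y => g y + u y) = MRT.expect ν g + MRT.expect ν u := by
  unfold MRT.expect
  rw [← Finset.sum_add_distrib]
  apply Finset.sum_congr rfl; intro y _; ring

lemma expect_sub (ν g u : State n → ℝ) :
    MRT.expect ν (fun y => g y - u y) = MRT.expect ν g - MRT.expect ν u := by
  unfold MRT.expect
  rw [← Finset.sum_sub_distrib]
  apply Finset.sum_congr rfl; intro y _; ring

lemma expect_const {ν : State n → ℝ} (hν : ∑ y, ν y = 1) (a : ℝ) :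
    MRT.expect ν (fun _ => a) = a := by
  unfold MRT.expect
  rw [← Finset.sum_mul, hν, one_mul]

lemma expect_mono {ν g u : State n → ℝ} (hν : ∀ y, 0 ≤ ν y) (h : ∀ y, g y ≤ u y) :
    MRT.expect ν g ≤ MRT.expect ν u := by
  apply Finset.sum_le_sum
  intro y _
  exact mul_le_mul_of_nonneg_left (h y) (hν y)

lemma expect_le {ν g : State n → ℝ} {M : ℝ} (hν : IsDist ν) (h : ∀ y, g y ≤ M) :
    MRT.expect ν g ≤ M := by
  have := expect_mono hν.1 h
  rwa [expect_const hν.2] at this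

lemma le_expect {ν g : State n → ℝ} {M : ℝ} (hν : IsDist ν) (h : ∀ y, M ≤ g y) :
    M ≤ MRT.expect ν g := by
  have := expect_mono hν.1 h
  rwa [expect_const hν.2] at this

lemma abs_expect_le {ν g : State n → ℝ} {M : ℝ} (hν : IsDist ν) (h : ∀ y, |g y| ≤ M) :
    |MRT.expect ν g| ≤ M := by
  rw [abs_le]
  constructor
  · exact le_expect hν (fun y => neg_le_of_abs_le (h y))
  · exact expect_le hν (fun y => le_of_abs_le (h y))

lemma expect_smul (ν g : State n → ℝ) (a : ℝ) :
    MRT.expect ν (fun y => a * g y) = a * MRT.expect ν g := by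
  unfold MRT.expect
  rw [Finset.mul_sum]
  apply Finset.sum_congr rfl; intro y _; ring

lemma expect_congr (ν : State n → ℝ) {g u : State n → ℝ} (h : ∀ y, g y = u y) :
    MRT.expect ν g = MRT.expect ν u := by
  apply Finset.sum_congr rfl; intro y _; rw [h y]

/-! ### Lipschitz lemmas -/

lemma lipV_mono {h : State n → ℝ} {c c' : Fin n → ℝ} (hcc : ∀ l, c l ≤ c' l)
    (hL : LipV h c) : LipV h c' := by
  intro x y
  refine (hL x y).trans (Finset.sum_le_sum fun l _ => ?_)
  exact mul_le_mul_of_nonneg_right (hcc l) (dd_nonneg x y l)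

lemma dd_update_le (x y : State n) (j : Fin n) (b : Bool) (l : Fin n) :
    dd (Function.update x j b) (Function.update y j b) l ≤ dd x y l := by
  by_cases h : l = j
  · subst h
    have h0 : dd (Function.update x l b) (Function.update y l b) l = 0 := by simp [dd]
    rw [h0]; exact dd_nonneg x y l
  · simp [dd, Function.update_of_ne h]

lemma lipV_tj {p : Fin n → ℝ} {j : Fin n} (hp0 : 0 ≤ p j) (hp1 : p j ≤ 1)
    {h : State n → ℝ} {c : Fin n → ℝ} (hc : ∀ l, 0 ≤ c l) (hL : LipV h c) :
    LipV (Tj p j h) c := by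
  intro x y
  unfold Tj
  have key : ∀ b : Bool, |h (Function.update x j b) - h (Function.update y j b)|
      ≤ ∑ l, c l * dd x y l := by
    intro b
    refine (hL _ _).trans (Finset.sum_le_sum fun l _ => ?_)
    exact mul_le_mul_of_nonneg_left (dd_update_le x y j b l) (hc l)
  calc |p j * h (Function.update x j true) + (1 - p j) * h (Function.update x j false)
        - (p j * h (Function.update y j true) + (1 - p j) * h (Function.update y j false))|
      = |p j * (h (Function.update x j true) - h (Function.update y j true))
        + (1 - p j) * (h (Function.update x j false) - h (Function.update y j false))| := by
        ring_nf
    _ ≤ |p j * (h (Function.update x j true) - h (Function.update y j true))|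
        + |(1 - p j) * (h (Function.update x j false) - h (Function.update y j false))| :=
        abs_add_le _ _
    _ ≤ p j * (∑ l, c l * dd x y l) + (1 - p j) * (∑ l, c l * dd x y l) := by
        rw [abs_mul, abs_mul, abs_of_nonneg hp0, abs_of_nonneg (by linarith : (0:ℝ) ≤ 1 - p j)]
        exact add_le_add (mul_le_mul_of_nonneg_left (key true) hp0)
          (mul_le_mul_of_nonneg_left (key false) (by linarith))
    _ = ∑ l, c l * dd x y l := by ring

lemma lipV_av {p : Fin n → ℝ} (hp : ∀ l, 0 ≤ p l ∧ p l ≤ 1)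
    {h : State n → ℝ} {c : Fin n → ℝ} (hc : ∀ l, 0 ≤ c l) (hL : LipV h c)
    (s : Finset (Fin n)) : LipV (Av p s h) c := by
  induction s using Finset.induction_on with
  | empty => rwa [Av_empty]
  | @insert j s hj ih =>
      rw [Av_insert p hj]
      exact lipV_tj (hp j).1 (hp j).2 hc ih

lemma osc_of_lip {h : State n → ℝ} {c : Fin n → ℝ} (hL : LipV h c) (y : State n) (j : Fin n) :
    |h (Function.update y j true) - h (Function.update y j false)| ≤ c j := by
  have := hL (Function.update y j true) (Function.update y j false)
  refine this.trans (le_of_eq ?_)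
  rw [Finset.sum_eq_single j]
  · simp [dd]
  · intro l _ hl
    simp [dd, Function.update_of_ne hl]
  · intro hh; exact absurd (mem_univ j) hh

lemma osc_le_sum {h : State n → ℝ} {c : Fin n → ℝ} (hc : ∀ l, 0 ≤ c l) (hL : LipV h c)
    (x y : State n) : |h x - h y| ≤ ∑ l, c l := by
  refine (hL x y).trans (Finset.sum_le_sum fun l _ => ?_)
  calc c l * dd x y l ≤ c l * 1 := mul_le_mul_of_nonneg_left (dd_le_one x y l) (hc l)
    _ = c l := mul_one _

/-! ### invariance of expectation under Tj -/

lemma tj_update_inv (p : Fin n → ℝ) (j : Fin n) (h : State n → ℝ) (y : State n) (b : Bool) :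
    Tj p j h (Function.update y j b) = Tj p j h y := by
  unfold Tj
  rw [Function.update_idem, Function.update_idem]

lemma expect_tj {q : Fin n → ℝ} (j : Fin n) (u : State n → ℝ) :
    MRT.expect (prodLaw q) (Tj q j u) = MRT.expect (prodLaw q) u := by
  unfold MRT.expect
  set Φ : State n → ℝ := fun y => Wr q j y * Tj q j u y with hΦ
  have hΦinv : ∀ y b, Φ (Function.update y j b) = Φ y := by
    intro y b
    simp only [hΦ]
    rw [Wr_update, tj_update_inv]
  have e1 : ∑ y, prodLaw q y * Tj q j u y = (∑ y, Φ y) / 2 := by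
    rw [S2 j (fun y => prodLaw q y * Tj q j u y), ← S1 j Φ hΦinv]
    apply Finset.sum_congr rfl
    intro y _
    by_cases hy : y j = true
    · simp only [hy, if_true]
      rw [prodLaw_factor q j, prodLaw_factor q j, Wr_update, tj_update_inv]
      simp only [hy, Function.update_self, if_true, Bool.false_eq_true, if_false, hΦ]
      ring
    · simp [hy]
  have e2 : ∑ y, prodLaw q y * u y = (∑ y, Φ y) / 2 := by
    rw [S2 j (fun y => prodLaw q y * u y), ← S1 j Φ hΦinv]
    apply Finset.sum_congr rfl
    intro y _
    by_cases hy : y j = true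
    · simp only [hy, if_true]
      rw [prodLaw_factor q j, prodLaw_factor q j, Wr_update]
      simp only [hy, Function.update_self, if_true, Bool.false_eq_true, if_false, hΦ]
      have hyy : Function.update y j true = y := by
        funext l
        by_cases hl : l = j
        · subst hl; rw [Function.update_self, hy]
        · rw [Function.update_of_ne hl]
      unfold Tj
      rw [hyy]
      ring
    · simp [hy]
  rw [e1, e2]

end LDE
end
noncomputable section
namespace LDE
open MRT Finset

variable {n : ℕ}

/-! ### comparison of product measures (Lipschitz test functions) -/

lemma av_comp {p q : Fin n → ℝ} (hp : ∀ l, 0 ≤ p l ∧ p l ≤ 1) (hq : ∀ l, 0 ≤ q l ∧ q l ≤ 1)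
    {c : Fin n → ℝ} (hc : ∀ l, 0 ≤ c l) {h : State n → ℝ} (hL : LipV h c)
    (s : Finset (Fin n)) :
    ∀ y, |Av p s h y - Av q s h y| ≤ ∑ j ∈ s, c j * |p j - q j| := by
  induction s using Finset.induction_on with
  | empty => intro y; simp [Av_empty]
  | @insert j s hj ih =>
      intro y
      rw [Av_insert p hj, Av_insert q hj, Finset.sum_insert hj]
      have hLq : LipV (Av q s h) c := lipV_av hq hc hL s
      have step1 : |Tj p j (Av p s h) y - Tj p j (Av q s h) y|
          ≤ ∑ l ∈ s, c l * |p l - q l| := by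
        have e : Tj p j (Av p s h) y - Tj p j (Av q s h) y
            = p j * (Av p s h (Function.update y j true) - Av q s h (Function.update y j true))
            + (1 - p j) * (Av p s h (Function.update y j false)
                - Av q s h (Function.update y j false)) := by
          unfold Tj; ring
        rw [e]
        calc _ ≤ |p j * (Av p s h (Function.update y j true)
                  - Av q s h (Function.update y j true))|
              + |(1 - p j) * (Av p s h (Function.update y j false)
                  - Av q s h (Function.update y j false))| := abs_add_le _ _
          _ ≤ p j * (∑ l ∈ s, c l * |p l - q l|) + (1 - p j) * (∑ l ∈ s, c l * |p l - q l|) := by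
              rw [abs_mul, abs_mul, abs_of_nonneg (hp j).1,
                abs_of_nonneg (by linarith [(hp j).2] : (0:ℝ) ≤ 1 - p j)]
              exact add_le_add
                (mul_le_mul_of_nonneg_left (ih _) (hp j).1)
                (mul_le_mul_of_nonneg_left (ih _) (by linarith [(hp j).2]))
          _ = ∑ l ∈ s, c l * |p l - q l| := by ring
      have step2 : |Tj p j (Av q s h) y - Tj q j (Av q s h) y| ≤ c j * |p j - q j| := by
        have e : Tj p j (Av q s h) y - Tj q j (Av q s h) y
            = (p j - q j) * (Av q s h (Function.update y j true)
              - Av q s h (Function.update y j false)) := by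
          unfold Tj; ring
        rw [e, abs_mul, mul_comm]
        exact mul_le_mul_of_nonneg_right (osc_of_lip hLq y j) (abs_nonneg _)
      calc |Tj p j (Av p s h) y - Tj q j (Av q s h) y|
          ≤ |Tj p j (Av p s h) y - Tj p j (Av q s h) y|
            + |Tj p j (Av q s h) y - Tj q j (Av q s h) y| := abs_sub_le _ _ _
        _ ≤ (∑ l ∈ s, c l * |p l - q l|) + c j * |p j - q j| := add_le_add step1 step2
        _ = c j * |p j - q j| + ∑ l ∈ s, c l * |p l - q l| := by ring

lemma expect_comp {p q : Fin n → ℝ} (hp : ∀ l, 0 ≤ p l ∧ p l ≤ 1)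
    (hq : ∀ l, 0 ≤ q l ∧ q l ≤ 1)
    {c : Fin n → ℝ} (hc : ∀ l, 0 ≤ c l) {h : State n → ℝ} (hL : LipV h c) :
    |MRT.expect (prodLaw p) h - MRT.expect (prodLaw q) h| ≤ ∑ j, c j * |p j - q j| := by
  have := av_comp hp hq hc hL univ (fun _ => false)
  rwa [Av_univ, Av_univ] at this

/-! ### Efron–Stein inequality for product Bernoulli measures -/

lemma var_prod_le {p : Fin n → ℝ} (hp : ∀ l, 0 ≤ p l ∧ p l ≤ 1)
    {c : Fin n → ℝ} (hc : ∀ l, 0 ≤ c l) {h : State n → ℝ} (hL : LipV h c) :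
    MRT.expect (prodLaw p) (fun y => h y ^ 2) - (MRT.expect (prodLaw p) h) ^ 2
      ≤ (∑ l, c l ^ 2) / 4 := by
  have key : ∀ s : Finset (Fin n),
      MRT.expect (prodLaw p) (fun y => h y ^ 2)
        - MRT.expect (prodLaw p) (fun y => (Av p s h y) ^ 2) ≤ (∑ l ∈ s, c l ^ 2) / 4 := by
    intro s
    induction s using Finset.induction_on with
    | empty =>
        rw [Av_empty]
        simp
    | @insert j s hj ih =>
        rw [Finset.sum_insert hj]
        have hLav : LipV (Av p s h) c := lipV_av hp hc hL s
        set g := Av p s h with hg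
        have pointwise : ∀ y, Tj p j (fun z => g z ^ 2) y - (Tj p j g y) ^ 2
            ≤ c j ^ 2 / 4 := by
          intro y
          have e : Tj p j (fun z => g z ^ 2) y - (Tj p j g y) ^ 2
              = p j * (1 - p j) * (g (Function.update y j true)
                  - g (Function.update y j false)) ^ 2 := by
            unfold Tj; ring
          rw [e]
          have h1 : p j * (1 - p j) ≤ 1/4 := by nlinarith [(hp j).1, (hp j).2, sq_nonneg (p j - 1/2)]
          have h2 : (g (Function.update y j true) - g (Function.update y j false)) ^ 2
              ≤ c j ^ 2 := by
            rw [← sq_abs]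
            apply pow_le_pow_left₀ (abs_nonneg _) (osc_of_lip hLav y j)
          calc p j * (1 - p j) * (g (Function.update y j true)
                - g (Function.update y j false)) ^ 2
              ≤ 1/4 * c j ^ 2 := by
                apply mul_le_mul h1 h2 (sq_nonneg _)
                norm_num
            _ = c j ^ 2 / 4 := by ring
        have pointwise0 : ∀ y, 0 ≤ Tj p j (fun z => g z ^ 2) y - (Tj p j g y) ^ 2 := by
          intro y
          have e : Tj p j (fun z => g z ^ 2) y - (Tj p j g y) ^ 2
              = p j * (1 - p j) * (g (Function.update y j true)
                  - g (Function.update y j false)) ^ 2 := by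
            unfold Tj; ring
          rw [e]
          apply mul_nonneg (mul_nonneg (hp j).1 (by linarith [(hp j).2])) (sq_nonneg _)
        -- E[(Tj g)^2] ≥ E[g^2] - c j ^2/4
        have einv : MRT.expect (prodLaw p) (Tj p j (fun z => g z ^ 2))
            = MRT.expect (prodLaw p) (fun z => g z ^ 2) := expect_tj j _
        have mono : MRT.expect (prodLaw p) (fun y => Tj p j (fun z => g z ^ 2) y
              - (Tj p j g y) ^ 2) ≤ c j ^ 2 / 4 :=
          expect_le (prodLaw_isDist hp) pointwise
        have esub := expect_sub (prodLaw p) (fun y => Tj p j (fun z => g z ^ 2) y)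
          (fun y => (Tj p j g y) ^ 2)
        have step : MRT.expect (prodLaw p) (fun z => g z ^ 2) - c j ^ 2 / 4
            ≤ MRT.expect (prodLaw p) (fun y => (Tj p j g y) ^ 2) := by
          have : MRT.expect (prodLaw p) (fun y => Tj p j (fun z => g z ^ 2) y)
              - MRT.expect (prodLaw p) (fun y => (Tj p j g y) ^ 2) ≤ c j ^ 2 / 4 := by
            rw [← esub]; exact mono
          have e2 : MRT.expect (prodLaw p) (fun y => Tj p j (fun z => g z ^ 2) y)
              = MRT.expect (prodLaw p) (fun z => g z ^ 2) := einv
          linarith [this, e2 ▸ this]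
        have av_ins : MRT.expect (prodLaw p) (fun y => (Av p (insert j s) h y) ^ 2)
            = MRT.expect (prodLaw p) (fun y => (Tj p j g y) ^ 2) := by
          apply expect_congr
          intro y
          rw [Av_insert p hj]
        rw [av_ins]
        linarith [ih, step]
  have h2 := key univ
  have e3 : MRT.expect (prodLaw p) (fun y => (Av p univ h y) ^ 2)
      = (MRT.expect (prodLaw p) h) ^ 2 := by
    have : ∀ y, (Av p univ h y) ^ 2 = (MRT.expect (prodLaw p) h) ^ 2 := by
      intro y; rw [Av_univ]
    rw [expect_congr (prodLaw p) this, expect_const (prodLaw_sum p)]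
  rw [e3] at h2
  exact h2

end LDE
end
noncomputable section
namespace LDE
open MRT Finset

variable {n : ℕ}

lemma tj_one (p : Fin n → ℝ) (j : Fin n) : Tj p j (fun _ => (1:ℝ)) = fun _ => 1 := by
  funext y; unfold Tj; ring

lemma av_one (p : Fin n → ℝ) (s : Finset (Fin n)) : Av p s (fun _ => (1:ℝ)) = fun _ => 1 := by
  induction s using Finset.induction_on with
  | empty => exact Av_empty p _
  | @insert j s hj ih => rw [Av_insert p hj, ih, tj_one]

lemma tj_indep {p : Fin n → ℝ} {i j : Fin n} (hij : j ≠ i) {h : State n → ℝ}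
    (hI : Indep i h) : Indep i (Tj p j h) := by
  intro y b
  unfold Tj
  rw [Function.update_comm (Ne.symm hij), Function.update_comm (Ne.symm hij), hI, hI]

lemma av_indep {p : Fin n → ℝ} {i : Fin n} {s : Finset (Fin n)} (hi : i ∉ s)
    {h : State n → ℝ} (hI : Indep i h) : Indep i (Av p s h) := by
  induction s using Finset.induction_on with
  | empty => rwa [Av_empty]
  | @insert j s hj ih =>
      rw [Av_insert p hj]
      have hji : j ≠ i := fun hh => hi (hh ▸ Finset.mem_insert_self j s)
      exact tj_indep hji (ih (fun hh => hi (Finset.mem_insert_of_mem hh)))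

/-- `h₂` depends only on coordinate `i` -/
def OnlyDep (i : Fin n) (h : State n → ℝ) : Prop :=
  ∀ y j b, j ≠ i → h (Function.update y j b) = h y

lemma av_pullout {p : Fin n → ℝ} {i : Fin n} {s : Finset (Fin n)} (hi : i ∉ s)
    {h₁ h₂ : State n → ℝ} (hO : OnlyDep i h₂) :
    Av p s (fun y => h₁ y * h₂ y) = fun y => Av p s h₁ y * h₂ y := by
  induction s using Finset.induction_on with
  | empty => rw [Av_empty, Av_empty]
  | @insert j s hj ih =>
      have hji : j ≠ i := fun hh => hi (hh ▸ Finset.mem_insert_self j s)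
      have ih' := ih (fun hh => hi (Finset.mem_insert_of_mem hh))
      rw [Av_insert p hj, Av_insert p hj, ih']
      funext y
      unfold Tj
      simp only [hO y j true hji, hO y j false hji]
      ring

lemma expect_indep_mul {p : Fin n → ℝ} {i : Fin n} {h₁ h₂ : State n → ℝ}
    (hI : Indep i h₁) (hO : OnlyDep i h₂) :
    MRT.expect (prodLaw p) (fun y => h₁ y * h₂ y)
      = MRT.expect (prodLaw p) h₁ * MRT.expect (prodLaw p) h₂ := by
  set y₀ : State n := fun _ => false with hy₀
  have huniv : (univ : Finset (Fin n)) = insert i (univ.erase i) :=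
    (Finset.insert_erase (mem_univ i)).symm
  have hie : i ∉ univ.erase i := Finset.notMem_erase i univ
  have key : ∀ u : State n → ℝ, MRT.expect (prodLaw p) u = Tj p i (Av p (univ.erase i) u) y₀ := by
    intro u
    rw [← Av_univ p u y₀]
    conv_lhs => rw [huniv]
    rw [Av_insert p hie]
  -- E h₁
  have hAvInd : Indep i (Av p (univ.erase i) h₁) := av_indep hie hI
  have e1 : MRT.expect (prodLaw p) h₁ = Av p (univ.erase i) h₁ y₀ := by
    rw [key h₁]
    unfold Tj
    rw [hAvInd y₀ true, hAvInd y₀ false]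
    ring
  -- E h₂
  have e2 : MRT.expect (prodLaw p) h₂ = Tj p i h₂ y₀ := by
    rw [key h₂]
    have : Av p (univ.erase i) h₂ = fun y => Av p (univ.erase i) (fun _ => (1:ℝ)) y * h₂ y := by
      have := av_pullout (p := p) hie (h₁ := fun _ => (1:ℝ)) hO
      rw [← this]
      apply congrArg
      funext y; ring
    rw [this, av_one]
    unfold Tj
    simp
  -- E h₁h₂
  have e3 : MRT.expect (prodLaw p) (fun y => h₁ y * h₂ y)
      = Av p (univ.erase i) h₁ y₀ * Tj p i h₂ y₀ := by
    rw [key (fun y => h₁ y * h₂ y), av_pullout hie hO]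
    unfold Tj
    simp only [hAvInd y₀ true, hAvInd y₀ false]
    ring
  rw [e1, e2, e3]

lemma onlyDep_Yi (i : Fin n) : OnlyDep i (Yi i) := by
  intro y j b hji
  unfold Yi
  rw [Function.update_of_ne (Ne.symm hji)]

lemma expect_Yi (p : Fin n → ℝ) (i : Fin n) :
    MRT.expect (prodLaw p) (Yi i) = p i := by
  set y₀ : State n := fun _ => false with hy₀
  have huniv : (univ : Finset (Fin n)) = insert i (univ.erase i) :=
    (Finset.insert_erase (mem_univ i)).symm
  have hie : i ∉ univ.erase i := Finset.notMem_erase i univ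
  have key : MRT.expect (prodLaw p) (Yi i) = Tj p i (Av p (univ.erase i) (Yi i)) y₀ := by
    rw [← Av_univ p (Yi i) y₀]
    conv_lhs => rw [huniv]
    rw [Av_insert p hie]
  have : Av p (univ.erase i) (Yi i) = fun y => Av p (univ.erase i) (fun _ => (1:ℝ)) y * Yi i y := by
    have := av_pullout (p := p) hie (h₁ := fun _ => (1:ℝ)) (onlyDep_Yi i)
    rw [← this]
    apply congrArg
    funext y; ring
  rw [key, this, av_one]
  unfold Tj Yi
  simp

end LDE
end
noncomputable section
namespace LDE
open MRT Finset

variable {n : ℕ}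

def pop (Nbr : Fin n → Finset (Fin n)) (f : Fin n → Bool → Bool → ℝ → ℝ)
    (π : Fin n → ℝ) (h : State n → ℝ) : State n → ℝ :=
  fun y => ∑ y', kernel Nbr f π y y' * h y'

lemma pop_eq (Nbr : Fin n → Finset (Fin n)) (f : Fin n → Bool → Bool → ℝ → ℝ)
    (π : Fin n → ℝ) (h : State n → ℝ) (y : State n) :
    pop Nbr f π h y = MRT.expect (prodLaw (fun j => succProb Nbr f π y j)) h := rfl

lemma zc_nonneg (Nbr : Fin n → Finset (Fin n)) (y : State n) (i : Fin n) :
    0 ≤ zc Nbr y i := by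
  apply Finset.sum_nonneg
  intro j _
  split <;> norm_num

lemma zc_diff (Nbr : Fin n → Finset (Fin n)) (x y : State n) (i : Fin n) :
    |zc Nbr x i - zc Nbr y i| ≤ ∑ l ∈ Nbr i, dd x y l := by
  unfold zc
  rw [← Finset.sum_sub_distrib]
  refine (Finset.abs_sum_le_sum_abs _ _).trans (Finset.sum_le_sum fun l _ => ?_)
  rcases Bool.eq_false_or_eq_true (x l) with h1 | h1 <;>
    rcases Bool.eq_false_or_eq_true (y l) with h2 | h2 <;>
      simp [dd, h1, h2]

lemma succProb_mem {Nbr : Fin n → Finset (Fin n)} {f : Fin n → Bool → Bool → ℝ → ℝ}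
    (hpos : PosF f) {π : Fin n → ℝ} (hπ : ∀ j, 0 ≤ π j ∧ π j ≤ 1) (y : State n) (j : Fin n) :
    0 ≤ succProb Nbr f π y j ∧ succProb Nbr f π y j ≤ 1 := by
  have h1 := hpos j (y j) true (zc Nbr y j) (zc_nonneg Nbr y j)
  have h2 := hpos j (y j) false (zc Nbr y j) (zc_nonneg Nbr y j)
  rcases h1 with ⟨h1a, h1b⟩
  rcases h2 with ⟨h2a, h2b⟩
  rcases hπ j with ⟨hπ0, hπ1⟩
  unfold succProb
  constructor <;> nlinarith

lemma stat_expect {Nbr : Fin n → Finset (Fin n)} {f : Fin n → Bool → Bool → ℝ → ℝ}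
    {π : Fin n → ℝ} {μ : State n → ℝ} (hst : IsStationary Nbr f π μ) (h : State n → ℝ) :
    MRT.expect μ h = MRT.expect μ (pop Nbr f π h) := by
  conv_lhs => rw [← hst.2]
  unfold MRT.expect step pop
  have e : ∀ y' : State n, (∑ y, μ y * kernel Nbr f π y y') * h y'
      = ∑ y, μ y * (kernel Nbr f π y y' * h y') := by
    intro y'
    rw [Finset.sum_mul]
    apply Finset.sum_congr rfl
    intro y _
    ring
  rw [Finset.sum_congr rfl (fun y' (_ : y' ∈ univ) => e y'), Finset.sum_comm]
  apply Finset.sum_congr rfl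
  intro y _
  rw [Finset.mul_sum]

lemma succProb_lip {Nbr : Fin n → Finset (Fin n)} {f : Fin n → Bool → Bool → ℝ → ℝ}
    {L B : ℝ} {D : ℕ} {C : ℝ} (hreg : Regular Nbr f L B D C)
    {π : Fin n → ℝ} (hπ : ∀ j, 0 ≤ π j ∧ π j ≤ 1) (x y : State n) (j : Fin n) :
    |succProb Nbr f π x j - succProb Nbr f π y j|
      ≤ B * dd x y j + L * ∑ l ∈ Nbr j, dd x y l := by
  obtain ⟨hL0, hlip, hBB, hD, hBC, hC1⟩ := hreg
  have key : ∀ w : Bool, |f j (x j) w (zc Nbr x j) - f j (y j) w (zc Nbr y j)|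
      ≤ B * dd x y j + L * ∑ l ∈ Nbr j, dd x y l := by
    intro w
    have t1 : |f j (x j) w (zc Nbr x j) - f j (y j) w (zc Nbr x j)| ≤ B * dd x y j := by
      by_cases hxy : x j = y j
      · rw [hxy]
        simp [dd, hxy]
      · have hdd : dd x y j = 1 := by simp [dd, hxy]
        rw [hdd, mul_one]
        rcases Bool.eq_false_or_eq_true (x j) with h1 | h1 <;>
          rcases Bool.eq_false_or_eq_true (y j) with h2 | h2
        · exact absurd (h1.trans h2.symm) hxy
        · rw [h1, h2]
          exact hBB j w (zc Nbr x j) (zc_nonneg Nbr x j)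
        · rw [h1, h2, abs_sub_comm]
          exact hBB j w (zc Nbr x j) (zc_nonneg Nbr x j)
        · exact absurd (h1.trans h2.symm) hxy
    have t2 : |f j (y j) w (zc Nbr x j) - f j (y j) w (zc Nbr y j)|
        ≤ L * ∑ l ∈ Nbr j, dd x y l := by
      refine (hlip j (y j) w _ _ (zc_nonneg Nbr x j) (zc_nonneg Nbr y j)).trans ?_
      exact mul_le_mul_of_nonneg_left (zc_diff Nbr x y j) hL0
    calc |f j (x j) w (zc Nbr x j) - f j (y j) w (zc Nbr y j)|
        ≤ |f j (x j) w (zc Nbr x j) - f j (y j) w (zc Nbr x j)|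
          + |f j (y j) w (zc Nbr x j) - f j (y j) w (zc Nbr y j)| := abs_sub_le _ _ _
      _ ≤ B * dd x y j + L * ∑ l ∈ Nbr j, dd x y l := by linarith
  rcases hπ j with ⟨hπ0, hπ1⟩
  have e : succProb Nbr f π x j - succProb Nbr f π y j
      = π j * (f j (x j) true (zc Nbr x j) - f j (y j) true (zc Nbr y j))
        + (1 - π j) * (f j (x j) false (zc Nbr x j) - f j (y j) false (zc Nbr y j)) := by
    unfold succProb; ring
  rw [e]
  calc _ ≤ |π j * (f j (x j) true (zc Nbr x j) - f j (y j) true (zc Nbr y j))|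
        + |(1 - π j) * (f j (x j) false (zc Nbr x j) - f j (y j) false (zc Nbr y j))| :=
        abs_add_le _ _
    _ ≤ π j * (B * dd x y j + L * ∑ l ∈ Nbr j, dd x y l)
        + (1 - π j) * (B * dd x y j + L * ∑ l ∈ Nbr j, dd x y l) := by
        rw [abs_mul, abs_mul, abs_of_nonneg hπ0, abs_of_nonneg (by linarith : (0:ℝ) ≤ 1 - π j)]
        exact add_le_add (mul_le_mul_of_nonneg_left (key true) hπ0)
          (mul_le_mul_of_nonneg_left (key false) (by linarith))
    _ = B * dd x y j + L * ∑ l ∈ Nbr j, dd x y l := by ring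

/-- the influence matrix applied to a vector -/
def Amul (Nbr : Fin n → Finset (Fin n)) (L B : ℝ) (c : Fin n → ℝ) : Fin n → ℝ :=
  fun l => B * c l + L * ∑ j ∈ Nbr l, c j

def Amat (Nbr : Fin n → Finset (Fin n)) (L B : ℝ) (l j : Fin n) : ℝ :=
  (if j = l then B else 0) + (if j ∈ Nbr l then L else 0)

lemma sum_ite_mem_nbr (t : Finset (Fin n)) (F : Fin n → ℝ) :
    ∑ l, (if l ∈ t then F l else 0) = ∑ l ∈ t, F l := by
  rw [Finset.sum_ite_mem, Finset.univ_inter]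

lemma amul_eq_sum {Nbr : Fin n → Finset (Fin n)} {L B : ℝ} (c : Fin n → ℝ) (l : Fin n) :
    Amul Nbr L B c l = ∑ j, Amat Nbr L B l j * c j := by
  unfold Amul Amat
  have e1 : ∑ j, ((if j = l then B else 0) + (if j ∈ Nbr l then L else 0)) * c j
      = (∑ j, (if j = l then B * c j else 0)) + ∑ j, (if j ∈ Nbr l then L * c j else 0) := by
    rw [← Finset.sum_add_distrib]
    apply Finset.sum_congr rfl
    intro j _
    split_ifs <;> ring
  rw [e1, Finset.sum_ite_eq' univ l (fun j => B * c j), sum_ite_mem_nbr, ← Finset.mul_sum]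
  simp

lemma amat_nonneg {Nbr : Fin n → Finset (Fin n)} {L B : ℝ} (hB0 : 0 ≤ B) (hL0 : 0 ≤ L)
    (l j : Fin n) : 0 ≤ Amat Nbr L B l j := by
  unfold Amat
  apply add_nonneg <;> split <;> norm_num <;> assumption

lemma amat_row {Nbr : Fin n → Finset (Fin n)} {f : Fin n → Bool → Bool → ℝ → ℝ}
    {L B : ℝ} {D : ℕ} {C : ℝ} (hreg : Regular Nbr f L B D C) (l : Fin n) :
    ∑ j, Amat Nbr L B l j ≤ C := by
  unfold Amat
  rw [Finset.sum_add_distrib, Finset.sum_ite_eq' univ l (fun _ => B)]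
  have e2 : ∑ j, (if j ∈ Nbr l then L else 0) = L * (Nbr l).card := by
    rw [sum_ite_mem_nbr, Finset.sum_const, nsmul_eq_mul]
    ring
  rw [e2]
  simp only [mem_univ, if_true]
  have h1 : L * ((Nbr l).card : ℝ) ≤ L * (D : ℝ) :=
    mul_le_mul_of_nonneg_left (Nat.cast_le.mpr (hreg.2.2.2.1 l)) hreg.1
  linarith [hreg.2.2.2.2.1]

lemma amat_col {Nbr : Fin n → Finset (Fin n)} {f : Fin n → Bool → Bool → ℝ → ℝ}
    {L B : ℝ} {D : ℕ} {C : ℝ} (hreg : Regular Nbr f L B D C) (hgood : GoodGraph Nbr)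
    (j : Fin n) : ∑ l, Amat Nbr L B l j ≤ C := by
  unfold Amat
  rw [Finset.sum_add_distrib, Finset.sum_ite_eq univ j (fun _ => B)]
  have e2 : ∑ l, (if j ∈ Nbr l then L else 0) = L * (Nbr j).card := by
    have e3 : ∀ l : Fin n, (if j ∈ Nbr l then L else 0) = (if l ∈ Nbr j then L else 0) := by
      intro l
      by_cases h : j ∈ Nbr l
      · rw [if_pos h, if_pos ((hgood.1 l j).mpr h)]
      · rw [if_neg h, if_neg (fun hh => h ((hgood.1 l j).mp hh))]
    rw [Finset.sum_congr rfl (fun l _ => e3 l), sum_ite_mem_nbr, Finset.sum_const,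
      nsmul_eq_mul]
    ring
  rw [e2]
  simp only [mem_univ, if_true]
  have h1 : L * ((Nbr j).card : ℝ) ≤ L * (D : ℝ) :=
    mul_le_mul_of_nonneg_left (Nat.cast_le.mpr (hreg.2.2.2.1 j)) hreg.1
  linarith [hreg.2.2.2.2.1]

lemma amul_nonneg {Nbr : Fin n → Finset (Fin n)} {L B : ℝ} (hB0 : 0 ≤ B) (hL0 : 0 ≤ L)
    {c : Fin n → ℝ} (hc : ∀ l, 0 ≤ c l) (l : Fin n) : 0 ≤ Amul Nbr L B c l := by
  unfold Amul
  apply add_nonneg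
  · exact mul_nonneg hB0 (hc l)
  · exact mul_nonneg hL0 (Finset.sum_nonneg fun j _ => hc j)

lemma amul_l1 {Nbr : Fin n → Finset (Fin n)} {f : Fin n → Bool → Bool → ℝ → ℝ}
    {L B : ℝ} {D : ℕ} {C : ℝ} (hreg : Regular Nbr f L B D C) (hgood : GoodGraph Nbr)
    (hB0 : 0 ≤ B) (hC0 : 0 ≤ C)
    {c : Fin n → ℝ} (hc : ∀ l, 0 ≤ c l) :
    ∑ l, Amul Nbr L B c l ≤ C * ∑ l, c l := by
  have e : ∑ l, Amul Nbr L B c l = ∑ j, (∑ l, Amat Nbr L B l j) * c j := by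
    rw [Finset.sum_congr rfl (fun l (_ : l ∈ univ) => amul_eq_sum c l), Finset.sum_comm]
    apply Finset.sum_congr rfl
    intro j _
    rw [Finset.sum_mul]
  rw [e, Finset.mul_sum]
  apply Finset.sum_le_sum
  intro j _
  exact mul_le_mul_of_nonneg_right (amat_col hreg hgood j) (hc j)

lemma amul_l2 {Nbr : Fin n → Finset (Fin n)} {f : Fin n → Bool → Bool → ℝ → ℝ}
    {L B : ℝ} {D : ℕ} {C : ℝ} (hreg : Regular Nbr f L B D C) (hgood : GoodGraph Nbr)
    (hB0 : 0 ≤ B) (hC0 : 0 ≤ C)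
    {c : Fin n → ℝ} (hc : ∀ l, 0 ≤ c l) :
    ∑ l, (Amul Nbr L B c l) ^ 2 ≤ C ^ 2 * ∑ l, c l ^ 2 := by
  have hL0 := hreg.1
  have key : ∀ l, (Amul Nbr L B c l) ^ 2
      ≤ C * ∑ j, Amat Nbr L B l j * c j ^ 2 := by
    intro l
    rw [amul_eq_sum c l]
    have cs := Finset.sum_mul_sq_le_sq_mul_sq univ
      (fun j => Real.sqrt (Amat Nbr L B l j))
      (fun j => Real.sqrt (Amat Nbr L B l j) * c j)
    have e1 : ∀ j, Real.sqrt (Amat Nbr L B l j) * (Real.sqrt (Amat Nbr L B l j) * c j)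
        = Amat Nbr L B l j * c j := by
      intro j
      rw [← mul_assoc, Real.mul_self_sqrt (amat_nonneg hB0 hL0 l j)]
    have e2 : ∀ j, (Real.sqrt (Amat Nbr L B l j)) ^ 2 = Amat Nbr L B l j := fun j =>
      Real.sq_sqrt (amat_nonneg hB0 hL0 l j)
    have e3 : ∀ j, (Real.sqrt (Amat Nbr L B l j) * c j) ^ 2 = Amat Nbr L B l j * c j ^ 2 := by
      intro j
      rw [mul_pow, e2 j]
    rw [Finset.sum_congr rfl (fun j _ => e1 j), Finset.sum_congr rfl (fun j _ => e2 j),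
      Finset.sum_congr rfl (fun j _ => e3 j)] at cs
    refine cs.trans ?_
    apply mul_le_mul_of_nonneg_right (amat_row hreg l)
    exact Finset.sum_nonneg fun j _ =>
      mul_nonneg (amat_nonneg hB0 hL0 l j) (sq_nonneg _)
  calc ∑ l, (Amul Nbr L B c l) ^ 2 ≤ ∑ l, C * ∑ j, Amat Nbr L B l j * c j ^ 2 :=
        Finset.sum_le_sum fun l _ => key l
    _ = C * ∑ j, (∑ l, Amat Nbr L B l j) * c j ^ 2 := by
        rw [← Finset.mul_sum, Finset.sum_comm]
        apply congrArg
        apply Finset.sum_congr rfl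
        intro j _
        rw [Finset.sum_mul]
    _ ≤ C * ∑ j, C * c j ^ 2 := by
        apply mul_le_mul_of_nonneg_left _ hC0
        apply Finset.sum_le_sum
        intro j _
        exact mul_le_mul_of_nonneg_right (amat_col hreg hgood j) (sq_nonneg _)
    _ = C ^ 2 * ∑ l, c l ^ 2 := by
        rw [← Finset.mul_sum]
        ring

lemma sum_nbr_swap {Nbr : Fin n → Finset (Fin n)} (hgood : GoodGraph Nbr)
    (F : Fin n → Fin n → ℝ) :
    ∑ j, ∑ l ∈ Nbr j, F j l = ∑ l, ∑ j ∈ Nbr l, F j l := by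
  have e1 : ∀ j, ∑ l ∈ Nbr j, F j l = ∑ l, (if l ∈ Nbr j then F j l else 0) := fun j =>
    (sum_ite_mem_nbr (Nbr j) (F j)).symm
  have e2 : ∀ l, ∑ j ∈ Nbr l, F j l = ∑ j, (if j ∈ Nbr l then F j l else 0) := fun l =>
    (sum_ite_mem_nbr (Nbr l) (fun j => F j l)).symm
  rw [Finset.sum_congr rfl (fun j _ => e1 j), Finset.sum_congr rfl (fun l _ => e2 l),
    Finset.sum_comm]
  apply Finset.sum_congr rfl
  intro l _
  apply Finset.sum_congr rfl
  intro j _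
  by_cases h : l ∈ Nbr j
  · rw [if_pos h, if_pos ((hgood.1 j l).mpr h)]
  · rw [if_neg h, if_neg (fun hh => h ((hgood.1 j l).mp hh))]

lemma pop_lip {Nbr : Fin n → Finset (Fin n)} {f : Fin n → Bool → Bool → ℝ → ℝ}
    {L B : ℝ} {D : ℕ} {C : ℝ} (hreg : Regular Nbr f L B D C) (hgood : GoodGraph Nbr)
    (hpos : PosF f) {π : Fin n → ℝ} (hπ : ∀ j, 0 ≤ π j ∧ π j ≤ 1)
    {c : Fin n → ℝ} (hc : ∀ l, 0 ≤ c l) {h : State n → ℝ} (hL : LipV h c) :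
    LipV (pop Nbr f π h) (Amul Nbr L B c) := by
  intro x y
  rw [pop_eq, pop_eq]
  refine (expect_comp (succProb_mem hpos hπ x) (succProb_mem hpos hπ y) hc hL).trans ?_
  have step1 : ∑ j, c j * |succProb Nbr f π x j - succProb Nbr f π y j|
      ≤ ∑ j, c j * (B * dd x y j + L * ∑ l ∈ Nbr j, dd x y l) :=
    Finset.sum_le_sum fun j _ =>
      mul_le_mul_of_nonneg_left (succProb_lip hreg hπ x y j) (hc j)
  refine step1.trans (le_of_eq ?_)
  have e1 : ∑ j, c j * (B * dd x y j + L * ∑ l ∈ Nbr j, dd x y l)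
      = (∑ j, B * c j * dd x y j) + L * ∑ j, ∑ l ∈ Nbr j, c j * dd x y l := by
    rw [Finset.mul_sum, ← Finset.sum_add_distrib]
    apply Finset.sum_congr rfl
    intro j _
    have h2 : ∑ l ∈ Nbr j, c j * dd x y l = c j * ∑ l ∈ Nbr j, dd x y l := by
      rw [Finset.mul_sum]
    rw [h2]
    ring
  rw [e1, sum_nbr_swap hgood (fun j l => c j * dd x y l)]
  unfold Amul
  rw [Finset.mul_sum, ← Finset.sum_add_distrib]
  apply Finset.sum_congr rfl
  intro l _
  have h2 : ∑ j ∈ Nbr l, c j * dd x y l = (∑ j ∈ Nbr l, c j) * dd x y l := by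
    rw [Finset.sum_mul]
  rw [h2]
  ring

end LDE
end
noncomputable section
namespace LDE
open MRT Finset Filter Topology

variable {n : ℕ}

def Vv (ν h : State n → ℝ) : ℝ :=
  MRT.expect ν (fun y => h y ^ 2) - (MRT.expect ν h) ^ 2

lemma Vv_eq {ν h : State n → ℝ} (hν : IsDist ν) :
    Vv ν h = ∑ y, ν y * (h y - MRT.expect ν h) ^ 2 := by
  set a := MRT.expect ν h with ha
  have e : ∀ y : State n, ν y * (h y - a) ^ 2
      = ν y * h y ^ 2 - 2 * a * (ν y * h y) + a ^ 2 * ν y := by intro y; ring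
  rw [Finset.sum_congr rfl (fun y _ => e y), Finset.sum_add_distrib, Finset.sum_sub_distrib,
    ← Finset.mul_sum, ← Finset.mul_sum, hν.2, mul_one]
  have h2 : ∑ y, ν y * h y = a := rfl
  unfold Vv MRT.expect
  rw [h2]
  ring

lemma Vv_nonneg {ν h : State n → ℝ} (hν : IsDist ν) : 0 ≤ Vv ν h := by
  rw [Vv_eq hν]
  exact Finset.sum_nonneg fun y _ => mul_nonneg (hν.1 y) (sq_nonneg _)

lemma Vv_le_sq {ν h : State n → ℝ} (hν : IsDist ν) (b : ℝ) :
    Vv ν h ≤ MRT.expect ν (fun y => (h y - b) ^ 2) := by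
  set a := MRT.expect ν h with ha
  have e : MRT.expect ν (fun y => (h y - b) ^ 2)
      = MRT.expect ν (fun y => h y ^ 2) - 2 * b * a + b ^ 2 := by
    have e1 : MRT.expect ν (fun y => (h y - b) ^ 2)
        = MRT.expect ν (fun y => h y ^ 2 - (2 * b * h y - b ^ 2)) := by
      apply expect_congr; intro y; ring
    rw [e1, expect_sub, expect_sub, expect_const hν.2]
    have e2 : MRT.expect ν (fun y => 2 * b * h y) = 2 * b * a := expect_smul ν h (2 * b)
    rw [e2]
    ring
  unfold Vv
  rw [e]
  nlinarith [sq_nonneg (a - b)]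

lemma Vv_tail {ν h : State n → ℝ} (hν : IsDist ν) {c : Fin n → ℝ}
    (hc : ∀ l, 0 ≤ c l) (hL : LipV h c) : Vv ν h ≤ (∑ l, c l) ^ 2 := by
  refine (Vv_le_sq hν (h (fun _ => false))).trans ?_
  apply expect_le hν
  intro y
  have h1 : |h y - h (fun _ => false)| ≤ ∑ l, c l := osc_le_sum hc hL y _
  calc (h y - h (fun _ => false)) ^ 2 = |h y - h (fun _ => false)| ^ 2 := (sq_abs _).symm
    _ ≤ (∑ l, c l) ^ 2 := pow_le_pow_left₀ (abs_nonneg _) h1 2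

lemma expect_dev {ν h : State n → ℝ} (hν : IsDist ν) {c : Fin n → ℝ}
    (hc : ∀ l, 0 ≤ c l) (hL : LipV h c) (y₀ : State n) :
    |MRT.expect ν h - h y₀| ≤ ∑ l, c l := by
  have e : MRT.expect ν h - h y₀ = MRT.expect ν (fun y => h y - h y₀) := by
    rw [expect_sub, expect_const hν.2]
  rw [e]
  exact abs_expect_le hν fun y => osc_le_sum hc hL y y₀

/-- Cauchy–Schwarz for covariances. -/
lemma cov_cs {ν u v : State n → ℝ} (hν : IsDist ν) :
    |MRT.expect ν (fun y => u y * v y) - MRT.expect ν u * MRT.expect ν v|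
      ≤ Real.sqrt (Vv ν u) * Real.sqrt (Vv ν v) := by
  set a := MRT.expect ν u with ha
  set b := MRT.expect ν v with hb
  have id1 : MRT.expect ν (fun y => u y * v y) - a * b
      = ∑ y, ν y * ((u y - a) * (v y - b)) := by
    have e : ∀ y : State n, ν y * ((u y - a) * (v y - b))
        = ν y * (u y * v y) - a * (ν y * v y) - b * (ν y * u y) + a * b * ν y := by
      intro y; ring
    rw [Finset.sum_congr rfl (fun y _ => e y), Finset.sum_add_distrib,
      Finset.sum_sub_distrib, Finset.sum_sub_distrib, ← Finset.mul_sum, ← Finset.mul_sum,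
      ← Finset.mul_sum, hν.2, mul_one]
    have h2 : ∑ y, ν y * v y = b := rfl
    have h3 : ∑ y, ν y * u y = a := rfl
    rw [h2, h3]
    unfold MRT.expect
    ring
  have cs := Finset.sum_mul_sq_le_sq_mul_sq univ
    (fun y => Real.sqrt (ν y) * (u y - a)) (fun y => Real.sqrt (ν y) * (v y - b))
  have e1 : ∀ y : State n, (Real.sqrt (ν y) * (u y - a)) * (Real.sqrt (ν y) * (v y - b))
      = ν y * ((u y - a) * (v y - b)) := by
    intro y
    have hss : Real.sqrt (ν y) * Real.sqrt (ν y) = ν y := Real.mul_self_sqrt (hν.1 y)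
    calc Real.sqrt (ν y) * (u y - a) * (Real.sqrt (ν y) * (v y - b))
        = (Real.sqrt (ν y) * Real.sqrt (ν y)) * ((u y - a) * (v y - b)) := by ring
      _ = ν y * ((u y - a) * (v y - b)) := by rw [hss]
  have e2 : ∀ y : State n, (Real.sqrt (ν y) * (u y - a)) ^ 2 = ν y * (u y - a) ^ 2 := by
    intro y
    rw [mul_pow, Real.sq_sqrt (hν.1 y)]
  have e3 : ∀ y : State n, (Real.sqrt (ν y) * (v y - b)) ^ 2 = ν y * (v y - b) ^ 2 := by
    intro y
    rw [mul_pow, Real.sq_sqrt (hν.1 y)]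
  rw [Finset.sum_congr rfl (fun y _ => e1 y), Finset.sum_congr rfl (fun y _ => e2 y),
    Finset.sum_congr rfl (fun y _ => e3 y)] at cs
  rw [← Vv_eq hν, ← Vv_eq hν] at cs
  rw [← id1] at cs
  calc |MRT.expect ν (fun y => u y * v y) - a * b|
      = Real.sqrt ((MRT.expect ν (fun y => u y * v y) - a * b) ^ 2) :=
        (Real.sqrt_sq_eq_abs _).symm
    _ ≤ Real.sqrt (Vv ν u * Vv ν v) := Real.sqrt_le_sqrt cs
    _ = Real.sqrt (Vv ν u) * Real.sqrt (Vv ν v) := Real.sqrt_mul (Vv_nonneg hν) _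

end LDE
end
noncomputable section
namespace LDE
open MRT Finset Filter Topology

variable {n : ℕ} {Nbr : Fin n → Finset (Fin n)} {f : Fin n → Bool → Bool → ℝ → ℝ}
  {L B : ℝ} {D : ℕ} {C : ℝ}

lemma pop_sq_eq {π : Fin n → ℝ} (h : State n → ℝ) (y : State n) :
    pop Nbr f π (fun z => h z ^ 2) y
      = (Vv (prodLaw (fun j => succProb Nbr f π y j)) h) + (pop Nbr f π h y) ^ 2 := by
  rw [pop_eq, pop_eq]
  unfold Vv
  ring

lemma var_step (hreg : Regular Nbr f L B D C) (hgood : GoodGraph Nbr) (hpos : PosF f)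
    {π : Fin n → ℝ} (hπ : ∀ j, 0 ≤ π j ∧ π j ≤ 1) {μ : State n → ℝ}
    (hst : IsStationary Nbr f π μ)
    {h : State n → ℝ} {c : Fin n → ℝ} (hc : ∀ l, 0 ≤ c l) (hL : LipV h c) :
    Vv μ h ≤ (∑ l, c l ^ 2) / 4 + Vv μ (pop Nbr f π h) := by
  have hEh : MRT.expect μ h = MRT.expect μ (pop Nbr f π h) := stat_expect hst h
  have hEh2 : MRT.expect μ (fun y => h y ^ 2)
      = MRT.expect μ (pop Nbr f π (fun z => h z ^ 2)) := stat_expect hst _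
  have hbound : ∀ y, pop Nbr f π (fun z => h z ^ 2) y
      ≤ (∑ l, c l ^ 2) / 4 + (pop Nbr f π h y) ^ 2 := by
    intro y
    rw [pop_sq_eq]
    have hvv : Vv (prodLaw (fun j => succProb Nbr f π y j)) h ≤ (∑ l, c l ^ 2) / 4 :=
      var_prod_le (p := fun j => succProb Nbr f π y j) (succProb_mem hpos hπ y) hc hL
    linarith
  have emono : MRT.expect μ (pop Nbr f π (fun z => h z ^ 2))
      ≤ MRT.expect μ (fun y => (∑ l, c l ^ 2) / 4 + (pop Nbr f π h y) ^ 2) :=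
    expect_mono hst.1.1 hbound
  have eadd : MRT.expect μ (fun y => (∑ l, c l ^ 2) / 4 + (pop Nbr f π h y) ^ 2)
      = (∑ l, c l ^ 2) / 4 + MRT.expect μ (fun y => (pop Nbr f π h y) ^ 2) := by
    rw [expect_add]
    rw [expect_const hst.1.2]
  unfold Vv
  rw [hEh2, hEh]
  rw [eadd] at emono
  have : Vv μ (pop Nbr f π h) = MRT.expect μ (fun y => (pop Nbr f π h y) ^ 2)
      - (MRT.expect μ (pop Nbr f π h)) ^ 2 := rfl
  linarith [emono]

lemma var_iter (hreg : Regular Nbr f L B D C) (hgood : GoodGraph Nbr) (hpos : PosF f)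
    (hB0 : 0 ≤ B) (hC0 : 0 ≤ C)
    {π : Fin n → ℝ} (hπ : ∀ j, 0 ≤ π j ∧ π j ≤ 1) {μ : State n → ℝ}
    (hst : IsStationary Nbr f π μ) :
    ∀ m : ℕ, ∀ h c, LipV h c → (∀ l, 0 ≤ c l) →
      Vv μ h ≤ (∑ l, c l ^ 2) / 4 * (∑ s ∈ Finset.range m, (C ^ 2) ^ s)
        + (C ^ m * ∑ l, c l) ^ 2 := by
  intro m
  induction m with
  | zero =>
      intro h c hL hc
      simp only [Finset.range_zero, Finset.sum_empty, mul_zero, zero_add, pow_zero, one_mul]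
      exact Vv_tail hst.1 hc hL
  | succ m ih =>
      intro h c hL hc
      have hstep := var_step hreg hgood hpos hπ hst hc hL
      have hlip' : LipV (pop Nbr f π h) (Amul Nbr L B c) := pop_lip hreg hgood hpos hπ hc hL
      have hc' : ∀ l, 0 ≤ Amul Nbr L B c l := amul_nonneg hB0 hreg.1 hc
      have ihp := ih (pop Nbr f π h) (Amul Nbr L B c) hlip' hc'
      have hl2 : ∑ l, (Amul Nbr L B c l) ^ 2 ≤ C ^ 2 * ∑ l, c l ^ 2 :=
        amul_l2 hreg hgood hB0 hC0 hc
      have hl1 : ∑ l, Amul Nbr L B c l ≤ C * ∑ l, c l := amul_l1 hreg hgood hB0 hC0 hc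
      have hsum_nonneg : 0 ≤ ∑ l, Amul Nbr L B c l := Finset.sum_nonneg fun l _ => hc' l
      have hgeom_nonneg : 0 ≤ ∑ s ∈ Finset.range m, (C ^ 2) ^ s :=
        Finset.sum_nonneg fun s _ => pow_nonneg (sq_nonneg C) s
      have hcm : 0 ≤ C ^ m := pow_nonneg hC0 m
      have t1 : (∑ l, (Amul Nbr L B c l) ^ 2) / 4 * (∑ s ∈ Finset.range m, (C ^ 2) ^ s)
          ≤ (C ^ 2 * ∑ l, c l ^ 2) / 4 * (∑ s ∈ Finset.range m, (C ^ 2) ^ s) := by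
        apply mul_le_mul_of_nonneg_right _ hgeom_nonneg
        linarith
      have t2 : (C ^ m * ∑ l, Amul Nbr L B c l) ^ 2 ≤ (C ^ (m+1) * ∑ l, c l) ^ 2 := by
        have h1 : C ^ m * ∑ l, Amul Nbr L B c l ≤ C ^ m * (C * ∑ l, c l) :=
          mul_le_mul_of_nonneg_left hl1 hcm
        have h2 : C ^ m * (C * ∑ l, c l) = C ^ (m+1) * ∑ l, c l := by ring
        have h0 : 0 ≤ C ^ m * ∑ l, Amul Nbr L B c l := mul_nonneg hcm hsum_nonneg
        rw [← h2]
        exact pow_le_pow_left₀ h0 h1 2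
      have geom_succ : ∑ s ∈ Finset.range (m+1), (C ^ 2) ^ s
          = 1 + C ^ 2 * ∑ s ∈ Finset.range m, (C ^ 2) ^ s := by
        rw [geom_sum_succ]
        ring
      calc Vv μ h ≤ (∑ l, c l ^ 2) / 4 + Vv μ (pop Nbr f π h) := hstep
        _ ≤ (∑ l, c l ^ 2) / 4
            + ((∑ l, (Amul Nbr L B c l) ^ 2) / 4 * (∑ s ∈ Finset.range m, (C ^ 2) ^ s)
              + (C ^ m * ∑ l, Amul Nbr L B c l) ^ 2) := by linarith [ihp]
        _ ≤ (∑ l, c l ^ 2) / 4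
            + ((C ^ 2 * ∑ l, c l ^ 2) / 4 * (∑ s ∈ Finset.range m, (C ^ 2) ^ s)
              + (C ^ (m+1) * ∑ l, c l) ^ 2) := by linarith [t1, t2]
        _ = (∑ l, c l ^ 2) / 4 * (∑ s ∈ Finset.range (m+1), (C ^ 2) ^ s)
            + (C ^ (m+1) * ∑ l, c l) ^ 2 := by
            rw [geom_succ]
            ring

lemma geom_partial_le {r : ℝ} (hr0 : 0 ≤ r) (hr1 : r < 1) (m : ℕ) :
    ∑ s ∈ Finset.range m, r ^ s ≤ 1 / (1 - r) := by
  have h1 : (∑ s ∈ Finset.range m, r ^ s) * (1 - r) = 1 - r ^ m := by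
    have := geom_sum_mul r m
    linarith [this]
  have h2 : 0 < 1 - r := by linarith
  have h3 : r ^ m ≥ 0 := pow_nonneg hr0 m
  rw [le_div_iff₀ h2]
  linarith

lemma var_stationary (hreg : Regular Nbr f L B D C) (hgood : GoodGraph Nbr) (hpos : PosF f)
    (hB0 : 0 ≤ B) (hC0 : 0 ≤ C)
    {π : Fin n → ℝ} (hπ : ∀ j, 0 ≤ π j ∧ π j ≤ 1) {μ : State n → ℝ}
    (hst : IsStationary Nbr f π μ)
    {h : State n → ℝ} {c : Fin n → ℝ} (hL : LipV h c) (hc : ∀ l, 0 ≤ c l) :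
    Vv μ h ≤ (∑ l, c l ^ 2) / (4 * (1 - C ^ 2)) := by
  have hC1 : C < 1 := hreg.2.2.2.2.2
  have hC2 : C ^ 2 < 1 := by nlinarith
  have hC2' : 0 < 1 - C ^ 2 := by linarith
  have hcsq : 0 ≤ ∑ l, c l ^ 2 := Finset.sum_nonneg fun l _ => sq_nonneg _
  have key : ∀ m : ℕ, Vv μ h ≤ (∑ l, c l ^ 2) / (4 * (1 - C ^ 2))
      + ((∑ l, c l) ^ 2) * ((C ^ 2) ^ m) := by
    intro m
    have h1 := var_iter hreg hgood hpos hB0 hC0 hπ hst m h c hL hc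
    have h2 : (∑ l, c l ^ 2) / 4 * (∑ s ∈ Finset.range m, (C ^ 2) ^ s)
        ≤ (∑ l, c l ^ 2) / (4 * (1 - C ^ 2)) := by
      have := geom_partial_le (sq_nonneg C) hC2 m
      calc (∑ l, c l ^ 2) / 4 * (∑ s ∈ Finset.range m, (C ^ 2) ^ s)
          ≤ (∑ l, c l ^ 2) / 4 * (1 / (1 - C ^ 2)) := by
            apply mul_le_mul_of_nonneg_left this (by linarith)
        _ = (∑ l, c l ^ 2) / (4 * (1 - C ^ 2)) := by
            field_simp
    have h3 : (C ^ m * ∑ l, c l) ^ 2 = ((∑ l, c l) ^ 2) * ((C ^ 2) ^ m) := by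
      rw [mul_pow, ← pow_mul, ← pow_mul]
      ring_nf
    linarith [h1, h2, h3.symm.le, h3.le]
  have htend : Tendsto (fun m : ℕ => (∑ l, c l ^ 2) / (4 * (1 - C ^ 2))
      + ((∑ l, c l) ^ 2) * ((C ^ 2) ^ m)) atTop
      (𝓝 ((∑ l, c l ^ 2) / (4 * (1 - C ^ 2)) + ((∑ l, c l) ^ 2) * 0)) := by
    apply Tendsto.add tendsto_const_nhds
    apply Tendsto.const_mul
    exact tendsto_pow_atTop_nhds_zero_of_lt_one (sq_nonneg C) hC2
  rw [mul_zero, add_zero] at htend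
  exact ge_of_tendsto' htend key

end LDE
end
noncomputable section
namespace LDE
open MRT Finset Filter Topology

variable {n : ℕ} {Nbr : Fin n → Finset (Fin n)} {f : Fin n → Bool → Bool → ℝ → ℝ}
  {L B : ℝ} {D : ℕ} {C : ℝ}

lemma delta_iter (hreg : Regular Nbr f L B D C) (hgood : GoodGraph Nbr) (hpos : PosF f)
    (hB0 : 0 ≤ B) (hC0 : 0 ≤ C)
    {π : Fin n → ℝ} {i : Fin n} {γ : ℝ}
    (hπ : ∀ j, 0 ≤ π j ∧ π j ≤ 1)
    (hπ' : ∀ j, 0 ≤ Function.update π i γ j ∧ Function.update π i γ j ≤ 1)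
    {μ μi : State n → ℝ} (hst : IsStationary Nbr f π μ)
    (hst' : IsStationary Nbr f (Function.update π i γ) μi) :
    ∀ m : ℕ, ∀ h c, LipV h c → (∀ l, 0 ≤ c l) →
      |MRT.expect μ h - MRT.expect μi h|
        ≤ Real.sqrt (∑ l, c l ^ 2) * (∑ s ∈ Finset.range m, C ^ s)
          + 2 * C ^ m * ∑ l, c l := by
  intro m
  induction m with
  | zero =>
      intro h c hL hc
      simp only [Finset.range_zero, Finset.sum_empty, mul_zero, zero_add, pow_zero, mul_one]
      have d1 := expect_dev hst.1 hc hL (fun _ => false)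
      have d2 := expect_dev hst'.1 hc hL (fun _ => false)
      have tri : |MRT.expect μ h - MRT.expect μi h|
          ≤ |MRT.expect μ h - h (fun _ => false)| + |h (fun _ => false) - MRT.expect μi h| :=
        abs_sub_le _ _ _
      rw [abs_sub_comm (h (fun _ => false)) (MRT.expect μi h)] at tri
      linarith
  | succ m ih =>
      intro h c hL hc
      set π' := Function.update π i γ with hπ'def
      have e1 : MRT.expect μ h = MRT.expect μ (pop Nbr f π h) := stat_expect hst h
      have e2 : MRT.expect μi h = MRT.expect μi (pop Nbr f π' h) := stat_expect hst' h
      have hfirst : ∀ y, |pop Nbr f π h y - pop Nbr f π' h y| ≤ c i := by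
        intro y
        rw [pop_eq, pop_eq]
        refine (expect_comp (succProb_mem hpos hπ y) (succProb_mem hpos hπ' y) hc hL).trans ?_
        have hterm : ∀ j : Fin n, c j * |succProb Nbr f π y j - succProb Nbr f π' y j|
            ≤ if j = i then c i else 0 := by
          intro j
          by_cases hji : j = i
          · subst hji
            rw [if_pos rfl]
            have b1 := succProb_mem (Nbr := Nbr) hpos hπ y j
            have b2 := succProb_mem (Nbr := Nbr) hpos hπ' y j
            have habs : |succProb Nbr f π y j - succProb Nbr f π' y j| ≤ 1 := by
              rw [abs_le]
              constructor <;> [linarith [b1.1, b2.2]; linarith [b1.2, b2.1]]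
            calc c j * |succProb Nbr f π y j - succProb Nbr f π' y j|
                ≤ c j * 1 := mul_le_mul_of_nonneg_left habs (hc j)
              _ = c j := mul_one _
          · rw [if_neg hji]
            have : succProb Nbr f π' y j = succProb Nbr f π y j := by
              unfold succProb
              rw [hπ'def, Function.update_of_ne hji]
            rw [this, sub_self, abs_zero, mul_zero]
        refine (Finset.sum_le_sum fun j _ => hterm j).trans (le_of_eq ?_)
        rw [Finset.sum_ite_eq' univ i (fun _ => c i)]
        simp
      have hci : c i ≤ Real.sqrt (∑ l, c l ^ 2) := by
        have h1 : c i ^ 2 ≤ ∑ l, c l ^ 2 :=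
          Finset.single_le_sum (f := fun l => c l ^ 2) (fun l _ => sq_nonneg _) (mem_univ i)
        calc c i = Real.sqrt (c i ^ 2) := (Real.sqrt_sq (hc i)).symm
          _ ≤ Real.sqrt (∑ l, c l ^ 2) := Real.sqrt_le_sqrt h1
      have habs1 : |MRT.expect μ (pop Nbr f π h) - MRT.expect μ (pop Nbr f π' h)|
          ≤ c i := by
        have e : MRT.expect μ (pop Nbr f π h) - MRT.expect μ (pop Nbr f π' h)
            = MRT.expect μ (fun y => pop Nbr f π h y - pop Nbr f π' h y) := by
          rw [expect_sub]
        rw [e]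
        exact abs_expect_le hst.1 hfirst
      -- second piece via IH
      have hlip' : LipV (pop Nbr f π' h) (Amul Nbr L B c) := pop_lip hreg hgood hpos hπ' hc hL
      have hc' : ∀ l, 0 ≤ Amul Nbr L B c l := amul_nonneg hB0 hreg.1 hc
      have ihp := ih (pop Nbr f π' h) (Amul Nbr L B c) hlip' hc'
      have hl2 : Real.sqrt (∑ l, (Amul Nbr L B c l) ^ 2)
          ≤ C * Real.sqrt (∑ l, c l ^ 2) := by
        have h1 : ∑ l, (Amul Nbr L B c l) ^ 2 ≤ C ^ 2 * ∑ l, c l ^ 2 :=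
          amul_l2 hreg hgood hB0 hC0 hc
        calc Real.sqrt (∑ l, (Amul Nbr L B c l) ^ 2)
            ≤ Real.sqrt (C ^ 2 * ∑ l, c l ^ 2) := Real.sqrt_le_sqrt h1
          _ = C * Real.sqrt (∑ l, c l ^ 2) := by
              rw [Real.sqrt_mul (sq_nonneg C), Real.sqrt_sq hC0]
      have hl1 : ∑ l, Amul Nbr L B c l ≤ C * ∑ l, c l := amul_l1 hreg hgood hB0 hC0 hc
      have hgeom_nonneg : 0 ≤ ∑ s ∈ Finset.range m, C ^ s :=
        Finset.sum_nonneg fun s _ => pow_nonneg hC0 s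
      have hcm : 0 ≤ C ^ m := pow_nonneg hC0 m
      have hsq_nonneg : 0 ≤ Real.sqrt (∑ l, c l ^ 2) := Real.sqrt_nonneg _
      have step2 : |MRT.expect μ (pop Nbr f π' h) - MRT.expect μi (pop Nbr f π' h)|
          ≤ C * Real.sqrt (∑ l, c l ^ 2) * (∑ s ∈ Finset.range m, C ^ s)
            + 2 * C ^ (m + 1) * ∑ l, c l := by
        refine ihp.trans ?_
        have t1 : Real.sqrt (∑ l, (Amul Nbr L B c l) ^ 2) * (∑ s ∈ Finset.range m, C ^ s)
            ≤ C * Real.sqrt (∑ l, c l ^ 2) * (∑ s ∈ Finset.range m, C ^ s) :=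
          mul_le_mul_of_nonneg_right hl2 hgeom_nonneg
        have t2 : 2 * C ^ m * ∑ l, Amul Nbr L B c l ≤ 2 * C ^ (m + 1) * ∑ l, c l := by
          have h1 : 2 * C ^ m * ∑ l, Amul Nbr L B c l ≤ 2 * C ^ m * (C * ∑ l, c l) :=
            mul_le_mul_of_nonneg_left hl1 (by positivity)
          have h2 : 2 * C ^ m * (C * ∑ l, c l) = 2 * C ^ (m + 1) * ∑ l, c l := by ring
          linarith
        linarith
      calc |MRT.expect μ h - MRT.expect μi h|
          = |MRT.expect μ (pop Nbr f π h) - MRT.expect μi (pop Nbr f π' h)| := by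
            rw [← e1, ← e2]
        _ ≤ |MRT.expect μ (pop Nbr f π h) - MRT.expect μ (pop Nbr f π' h)|
            + |MRT.expect μ (pop Nbr f π' h) - MRT.expect μi (pop Nbr f π' h)| :=
            abs_sub_le _ _ _
        _ ≤ Real.sqrt (∑ l, c l ^ 2)
            + (C * Real.sqrt (∑ l, c l ^ 2) * (∑ s ∈ Finset.range m, C ^ s)
              + 2 * C ^ (m + 1) * ∑ l, c l) := add_le_add (habs1.trans hci) step2
        _ = Real.sqrt (∑ l, c l ^ 2) * (∑ s ∈ Finset.range (m + 1), C ^ s)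
            + 2 * C ^ (m + 1) * ∑ l, c l := by
            rw [geom_sum_succ]
            ring

lemma delta_expect (hreg : Regular Nbr f L B D C) (hgood : GoodGraph Nbr) (hpos : PosF f)
    (hB0 : 0 ≤ B) (hC0 : 0 ≤ C)
    {π : Fin n → ℝ} {i : Fin n} {γ : ℝ}
    (hπ : ∀ j, 0 ≤ π j ∧ π j ≤ 1)
    (hπ' : ∀ j, 0 ≤ Function.update π i γ j ∧ Function.update π i γ j ≤ 1)
    {μ μi : State n → ℝ} (hst : IsStationary Nbr f π μ)
    (hst' : IsStationary Nbr f (Function.update π i γ) μi)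
    {h : State n → ℝ} {c : Fin n → ℝ} (hL : LipV h c) (hc : ∀ l, 0 ≤ c l) :
    |MRT.expect μ h - MRT.expect μi h| ≤ Real.sqrt (∑ l, c l ^ 2) / (1 - C) := by
  have hC1 : C < 1 := hreg.2.2.2.2.2
  have hC1' : 0 < 1 - C := by linarith
  have hsq_nonneg : 0 ≤ Real.sqrt (∑ l, c l ^ 2) := Real.sqrt_nonneg _
  have key : ∀ m : ℕ, |MRT.expect μ h - MRT.expect μi h|
      ≤ Real.sqrt (∑ l, c l ^ 2) / (1 - C) + (2 * ∑ l, c l) * C ^ m := by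
    intro m
    have h1 := delta_iter hreg hgood hpos hB0 hC0 hπ hπ' hst hst' m h c hL hc
    have h2 : Real.sqrt (∑ l, c l ^ 2) * (∑ s ∈ Finset.range m, C ^ s)
        ≤ Real.sqrt (∑ l, c l ^ 2) / (1 - C) := by
      calc Real.sqrt (∑ l, c l ^ 2) * (∑ s ∈ Finset.range m, C ^ s)
          ≤ Real.sqrt (∑ l, c l ^ 2) * (1 / (1 - C)) :=
            mul_le_mul_of_nonneg_left (geom_partial_le hC0 hC1 m) hsq_nonneg
        _ = Real.sqrt (∑ l, c l ^ 2) / (1 - C) := by ring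
    have h3 : 2 * C ^ m * ∑ l, c l = (2 * ∑ l, c l) * C ^ m := by ring
    linarith [h1, h2, h3.le, h3.symm.le]
  have htend : Tendsto (fun m : ℕ => Real.sqrt (∑ l, c l ^ 2) / (1 - C)
      + (2 * ∑ l, c l) * C ^ m) atTop
      (𝓝 (Real.sqrt (∑ l, c l ^ 2) / (1 - C) + (2 * ∑ l, c l) * 0)) := by
    apply Tendsto.add tendsto_const_nhds
    apply Tendsto.const_mul
    exact tendsto_pow_atTop_nhds_zero_of_lt_one hC0 hC1
  rw [mul_zero, add_zero] at htend
  exact ge_of_tendsto' htend key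

lemma cov_transfer {π' : Fin n → ℝ} {μi : State n → ℝ}
    (hst' : IsStationary Nbr f π' μi) {i : Fin n} {h₁ h₂ : State n → ℝ}
    (hI : Indep i h₁) (hO : OnlyDep i h₂) :
    MRT.expect μi (fun y => h₁ y * h₂ y) - MRT.expect μi h₁ * MRT.expect μi h₂
      = MRT.expect μi (fun y => pop Nbr f π' h₁ y * pop Nbr f π' h₂ y)
        - MRT.expect μi (pop Nbr f π' h₁) * MRT.expect μi (pop Nbr f π' h₂) := by
  have e1 : MRT.expect μi (fun y => h₁ y * h₂ y)
      = MRT.expect μi (pop Nbr f π' (fun y => h₁ y * h₂ y)) := stat_expect hst' _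
  have e2 : ∀ y, pop Nbr f π' (fun y => h₁ y * h₂ y) y
      = pop Nbr f π' h₁ y * pop Nbr f π' h₂ y := by
    intro y
    rw [pop_eq, pop_eq, pop_eq]
    exact expect_indep_mul hI hO
  rw [e1, expect_congr μi e2, ← stat_expect hst' h₁, ← stat_expect hst' h₂]

end LDE
end
noncomputable section
namespace LDE
open MRT Finset

variable {n : ℕ} {Nbr : Fin n → Finset (Fin n)} {f : Fin n → Bool → Bool → ℝ → ℝ}

/-- Lipschitz vector for a function of `zc`. -/
lemma lip_of_zc {L : ℝ} (hL0 : 0 ≤ L) (i : Fin n) {g : ℝ → ℝ}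
    (hg : ∀ z₁ z₂, 0 ≤ z₁ → 0 ≤ z₂ → |g z₁ - g z₂| ≤ 2 * L * |z₁ - z₂|) :
    LipV (fun y => g (zc Nbr y i)) (fun l => if l ∈ Nbr i then 2 * L else 0) := by
  intro x y
  have h1 := hg (zc Nbr x i) (zc Nbr y i) (zc_nonneg Nbr x i) (zc_nonneg Nbr y i)
  have h2 : |zc Nbr x i - zc Nbr y i| ≤ ∑ l ∈ Nbr i, dd x y l := zc_diff Nbr x y i
  have h3 : ∑ l, (if l ∈ Nbr i then 2 * L else 0) * dd x y l
      = 2 * L * ∑ l ∈ Nbr i, dd x y l := by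
    have e : ∀ l : Fin n, (if l ∈ Nbr i then 2 * L else 0) * dd x y l
        = if l ∈ Nbr i then 2 * L * dd x y l else 0 := by
      intro l; split_ifs <;> ring
    rw [Finset.sum_congr rfl (fun l _ => e l), sum_ite_mem_nbr, Finset.mul_sum]
  rw [h3]
  calc |g (zc Nbr x i) - g (zc Nbr y i)| ≤ 2 * L * |zc Nbr x i - zc Nbr y i| := h1
    _ ≤ 2 * L * ∑ l ∈ Nbr i, dd x y l := by
        apply mul_le_mul_of_nonneg_left h2 (by linarith)

lemma lip_Yi (i : Fin n) : LipV (Yi i) (fun l => if l = i then (1:ℝ) else 0) := by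
  intro x y
  have h3 : ∑ l, (if l = i then (1:ℝ) else 0) * dd x y l = dd x y i := by
    rw [Finset.sum_eq_single i]
    · simp
    · intro l _ hl; rw [if_neg hl, zero_mul]
    · intro hh; exact absurd (mem_univ i) hh
  rw [h3]
  unfold Yi dd
  rcases Bool.eq_false_or_eq_true (x i) with h1 | h1 <;>
    rcases Bool.eq_false_or_eq_true (y i) with h2 | h2 <;>
      simp [h1, h2]

lemma indep_of_zc (hgood : GoodGraph Nbr) (i : Fin n) (g : ℝ → ℝ) :
    Indep i (fun y => g (zc Nbr y i)) := by
  intro y b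
  have : zc Nbr (Function.update y i b) i = zc Nbr y i := by
    unfold zc
    apply Finset.sum_congr rfl
    intro l hl
    have hli : l ≠ i := fun hh => hgood.2 i (hh ▸ hl)
    rw [Function.update_of_ne hli]
  simp only []
  rw [this]

lemma sum_zc_sq {L : ℝ} (i : Fin n) :
    ∑ l, (if l ∈ Nbr i then 2 * L else 0) ^ 2 = 4 * L ^ 2 * ((Nbr i).card : ℝ) := by
  have e : ∀ l : Fin n, (if l ∈ Nbr i then 2 * L else 0) ^ 2
      = if l ∈ Nbr i then 4 * L ^ 2 else 0 := by
    intro l; split_ifs <;> ring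
  rw [Finset.sum_congr rfl (fun l _ => e l), sum_ite_mem_nbr, Finset.sum_const, nsmul_eq_mul]
  ring

lemma sum_evec_sq (i : Fin n) :
    ∑ l : Fin n, (if l = i then (1:ℝ) else 0) ^ 2 = 1 := by
  have e : ∀ l : Fin n, (if l = i then (1:ℝ) else 0) ^ 2 = if l = i then (1:ℝ) else 0 := by
    intro l; split_ifs <;> ring
  rw [Finset.sum_congr rfl (fun l _ => e l), Finset.sum_ite_eq' univ i (fun _ => (1:ℝ))]
  simp

end LDE
end
set_option maxHeartbeats 2000000 in
open MRT LDE Finset in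
/-- characterization of the long-term direct effect: there is a constant `K`
depending only on `B` and `C` such that for every unit `i` and every `γ ∈ (0,1)`, the
stationary mean of `Y_i` under the tilted treatment probabilities `(π_i = γ, π_{−i})`
is within `K √L` of `E_{μ(π)}[a_i + b_i γ] / E_{μ(π)}[1 − c_i − d_i γ]`. -/
theorem lde_characterization
    (B C : ℝ) (hB0 : 0 ≤ B) (hC0 : 0 ≤ C) (hC1 : C < 1) :
    ∃ K : ℝ, 0 < K ∧
      ∀ (n : ℕ) (Nbr : Fin n → Finset (Fin n)) (f : Fin n → Bool → Bool → ℝ → ℝ)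
        (π : Fin n → ℝ) (L : ℝ) (D : ℕ),
        GoodGraph Nbr → PosF f → (∀ i, π i ∈ Set.Ioo (0 : ℝ) 1) →
        Regular Nbr f L B D C →
        ∀ (i : Fin n) (γ : ℝ), γ ∈ Set.Ioo (0 : ℝ) 1 →
        ∀ (μ μi : State n → ℝ),
          IsStationary Nbr f π μ →
          IsStationary Nbr f (Function.update π i γ) μi →
          |expect μi (Yi i) -
              expect μ (fun s => aF f i (zc Nbr s i) + bF f i (zc Nbr s i) * γ) /
                expect μ (fun s => 1 - cF f i (zc Nbr s i) - dF f i (zc Nbr s i) * γ)| ≤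
            K * Real.sqrt L := by
  classical
  have hC1' : (0:ℝ) < 1 - C := by linarith
  refine ⟨8 / (1 - C) ^ 2, by positivity, ?_⟩
  intro n Nbr f π L D hgood hpos hπio hreg i γ hγ μ μi hst hsti
  have hL0 : 0 ≤ L := hreg.1
  have hlipf := hreg.2.1
  have hBB := hreg.2.2.1
  have hDcard := hreg.2.2.2.1
  have hBLD := hreg.2.2.2.2.1
  have hπ : ∀ j, 0 ≤ π j ∧ π j ≤ 1 := fun j => ⟨(hπio j).1.le, (hπio j).2.le⟩
  have hγ0 : 0 ≤ γ := hγ.1.le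
  have hγ1 : γ ≤ 1 := hγ.2.le
  have hπ' : ∀ j, 0 ≤ Function.update π i γ j ∧ Function.update π i γ j ≤ 1 := by
    intro j
    by_cases hj : j = i
    · subst hj; rw [Function.update_self]; exact ⟨hγ0, hγ1⟩
    · rw [Function.update_of_ne hj]; exact hπ j
  have hDistμ : IsDist μ := hst.1
  have hDistμi : IsDist μi := hsti.1
  set s := Real.sqrt L with hs
  have hs0 : 0 ≤ s := Real.sqrt_nonneg L
  set g1 : ℝ → ℝ := fun z => aF f i z + bF f i z * γ with hg1
  set g2 : ℝ → ℝ := fun z => cF f i z + dF f i z * γ with hg2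
  set h0 : State n → ℝ := fun y => g1 (zc Nbr y i) with hh0
  set h1 : State n → ℝ := fun y => g2 (zc Nbr y i) with hh1
  set cvec : Fin n → ℝ := fun l => if l ∈ Nbr i then 2 * L else 0 with hcvec
  set evec : Fin n → ℝ := fun l => if l = i then (1:ℝ) else 0 with hevec
  have hcvec0 : ∀ l, 0 ≤ cvec l := by
    intro l; rw [hcvec]; dsimp only; split
    · linarith
    · exact le_rfl
  have hevec0 : ∀ l, 0 ≤ evec l := by
    intro l; rw [hevec]; dsimp only; split
    · exact zero_le_one
    · exact le_rfl
  -- Lipschitz properties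
  have hLip0 : LipV h0 cvec := by
    rw [hh0, hcvec]
    apply lip_of_zc hL0 i
    intro z₁ z₂ hz₁ hz₂
    have d00 := hlipf i false false z₁ z₂ hz₁ hz₂
    have d01 := hlipf i false true z₁ z₂ hz₁ hz₂
    have e : g1 z₁ - g1 z₂ = (1 - γ) * (f i false false z₁ - f i false false z₂)
        + γ * (f i false true z₁ - f i false true z₂) := by
      rw [hg1]; unfold aF bF; ring
    rw [e]
    have t1 : |(1 - γ) * (f i false false z₁ - f i false false z₂)|
        ≤ (1 - γ) * (L * |z₁ - z₂|) := by
      rw [abs_mul, abs_of_nonneg (by linarith : (0:ℝ) ≤ 1 - γ)]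
      exact mul_le_mul_of_nonneg_left d00 (by linarith)
    have t2 : |γ * (f i false true z₁ - f i false true z₂)| ≤ γ * (L * |z₁ - z₂|) := by
      rw [abs_mul, abs_of_nonneg hγ0]
      exact mul_le_mul_of_nonneg_left d01 hγ0
    have hnn : 0 ≤ L * |z₁ - z₂| := mul_nonneg hL0 (abs_nonneg _)
    calc |(1 - γ) * (f i false false z₁ - f i false false z₂)
          + γ * (f i false true z₁ - f i false true z₂)|
        ≤ |(1 - γ) * (f i false false z₁ - f i false false z₂)|
          + |γ * (f i false true z₁ - f i false true z₂)| := abs_add_le _ _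
      _ ≤ (1 - γ) * (L * |z₁ - z₂|) + γ * (L * |z₁ - z₂|) := add_le_add t1 t2
      _ = L * |z₁ - z₂| := by ring
      _ ≤ 2 * L * |z₁ - z₂| := by linarith
  have hLip1 : LipV h1 cvec := by
    rw [hh1, hcvec]
    apply lip_of_zc hL0 i
    intro z₁ z₂ hz₁ hz₂
    have d00 := hlipf i false false z₁ z₂ hz₁ hz₂
    have d01 := hlipf i false true z₁ z₂ hz₁ hz₂
    have d10 := hlipf i true false z₁ z₂ hz₁ hz₂
    have d11 := hlipf i true true z₁ z₂ hz₁ hz₂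
    have e : g2 z₁ - g2 z₂
        = (1 - γ) * ((f i true false z₁ - f i true false z₂)
            - (f i false false z₁ - f i false false z₂))
          + γ * ((f i true true z₁ - f i true true z₂)
            - (f i false true z₁ - f i false true z₂)) := by
      rw [hg2]; unfold cF dF; ring
    rw [e]
    have u1 : |(f i true false z₁ - f i true false z₂)
        - (f i false false z₁ - f i false false z₂)| ≤ 2 * (L * |z₁ - z₂|) := by
      have := abs_sub (f i true false z₁ - f i true false z₂)
        (f i false false z₁ - f i false false z₂)
      linarith [this, d10, d00]
    have u2 : |(f i true true z₁ - f i true true z₂)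
        - (f i false true z₁ - f i false true z₂)| ≤ 2 * (L * |z₁ - z₂|) := by
      have := abs_sub (f i true true z₁ - f i true true z₂)
        (f i false true z₁ - f i false true z₂)
      linarith [this, d11, d01]
    have t1 : |(1 - γ) * ((f i true false z₁ - f i true false z₂)
        - (f i false false z₁ - f i false false z₂))|
        ≤ (1 - γ) * (2 * (L * |z₁ - z₂|)) := by
      rw [abs_mul, abs_of_nonneg (by linarith : (0:ℝ) ≤ 1 - γ)]
      exact mul_le_mul_of_nonneg_left u1 (by linarith)
    have t2 : |γ * ((f i true true z₁ - f i true true z₂)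
        - (f i false true z₁ - f i false true z₂))|
        ≤ γ * (2 * (L * |z₁ - z₂|)) := by
      rw [abs_mul, abs_of_nonneg hγ0]
      exact mul_le_mul_of_nonneg_left u2 hγ0
    calc |(1 - γ) * ((f i true false z₁ - f i true false z₂)
          - (f i false false z₁ - f i false false z₂))
          + γ * ((f i true true z₁ - f i true true z₂)
            - (f i false true z₁ - f i false true z₂))|
        ≤ _ + _ := abs_add_le _ _
      _ ≤ (1 - γ) * (2 * (L * |z₁ - z₂|)) + γ * (2 * (L * |z₁ - z₂|)) := add_le_add t1 t2
      _ = 2 * L * |z₁ - z₂| := by ring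
  have hLipY : LipV (Yi i) evec := by rw [hevec]; exact lip_Yi i
  -- sums of squares
  have hcard : L * ((Nbr i).card : ℝ) ≤ C := by
    have h1 : ((Nbr i).card : ℝ) ≤ (D : ℝ) := Nat.cast_le.mpr (hDcard i)
    nlinarith [hL0, hBLD, hB0]
  have hsumc2 : ∑ l, cvec l ^ 2 ≤ 4 * (L * C) := by
    rw [hcvec, sum_zc_sq]
    nlinarith [mul_le_mul_of_nonneg_left hcard hL0]
  have hsumc2nn : 0 ≤ ∑ l, cvec l ^ 2 := Finset.sum_nonneg fun l _ => sq_nonneg _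
  have hsqrtc : Real.sqrt (∑ l, cvec l ^ 2) ≤ 2 * s := by
    have e1 : (4 : ℝ) * (L * C) ≤ 4 * L := by nlinarith
    have e2 : Real.sqrt (4 * L) = 2 * s := by
      rw [show (4:ℝ) * L = 2 ^ 2 * L by ring, hs]
      rw [Real.sqrt_mul (by positivity) L, Real.sqrt_sq (by norm_num : (0:ℝ) ≤ 2)]
    calc Real.sqrt (∑ l, cvec l ^ 2) ≤ Real.sqrt (4 * L) :=
          Real.sqrt_le_sqrt (by linarith)
      _ = 2 * s := e2
  have hsume2 : ∑ l, evec l ^ 2 = 1 := by rw [hevec]; exact sum_evec_sq i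
  -- delta bounds
  have hΔ0 : |MRT.expect μ h0 - MRT.expect μi h0| ≤ 2 * s / (1 - C) := by
    refine (delta_expect hreg hgood hpos hB0 hC0 hπ hπ' hst hsti hLip0 hcvec0).trans ?_
    exact div_le_div₀ (by positivity) hsqrtc hC1' le_rfl
  have hΔ1 : |MRT.expect μ h1 - MRT.expect μi h1| ≤ 2 * s / (1 - C) := by
    refine (delta_expect hreg hgood hpos hB0 hC0 hπ hπ' hst hsti hLip1 hcvec0).trans ?_
    exact div_le_div₀ (by positivity) hsqrtc hC1' le_rfl
  -- variance bounds for one-step conditional means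
  set π' := Function.update π i γ with hπ'def
  have hC2' : (0:ℝ) < 1 - C ^ 2 := by nlinarith
  have hLipP1 : LipV (pop Nbr f π' h1) (Amul Nbr L B cvec) :=
    pop_lip hreg hgood hpos hπ' hcvec0 hLip1
  have hLipPY : LipV (pop Nbr f π' (Yi i)) (Amul Nbr L B evec) :=
    pop_lip hreg hgood hpos hπ' hevec0 hLipY
  have hV1 : Vv μi (pop Nbr f π' h1) ≤ L / (1 - C) := by
    have hb := var_stationary hreg hgood hpos hB0 hC0 hπ' hsti hLipP1
      (amul_nonneg hB0 hL0 hcvec0)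
    have hA2 : ∑ l, (Amul Nbr L B cvec l) ^ 2 ≤ 4 * L := by
      have h2b := amul_l2 hreg hgood hB0 hC0 hcvec0
      have e1 : C ^ 2 ≤ 1 := by nlinarith
      have e2 : C ^ 2 * ∑ l, cvec l ^ 2 ≤ ∑ l, cvec l ^ 2 := by nlinarith
      have e3 : ∑ l, cvec l ^ 2 ≤ 4 * L := by nlinarith
      linarith
    have step1 : Vv μi (pop Nbr f π' h1) ≤ (4 * L) / (4 * (1 - C ^ 2)) :=
      hb.trans (div_le_div₀ (by positivity) hA2 (by linarith) le_rfl)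
    have step2 : (4 * L) / (4 * (1 - C ^ 2)) ≤ (4 * L) / (4 * (1 - C)) := by
      apply div_le_div_of_nonneg_left (by linarith) (by linarith)
      nlinarith
    have step3 : (4 * L) / (4 * (1 - C)) = L / (1 - C) :=
      mul_div_mul_left L (1 - C) (by norm_num)
    linarith
  have hV2 : Vv μi (pop Nbr f π' (Yi i)) ≤ 1 / (1 - C) := by
    have hb := var_stationary hreg hgood hpos hB0 hC0 hπ' hsti hLipPY
      (amul_nonneg hB0 hL0 hevec0)
    have hA2 : ∑ l, (Amul Nbr L B evec l) ^ 2 ≤ 1 := by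
      have h2b := amul_l2 hreg hgood hB0 hC0 hevec0
      rw [hsume2] at h2b
      nlinarith
    have step1 : Vv μi (pop Nbr f π' (Yi i)) ≤ 1 / (4 * (1 - C ^ 2)) :=
      hb.trans (div_le_div₀ (by positivity) hA2 (by linarith) le_rfl)
    have step2 : (1:ℝ) / (4 * (1 - C ^ 2)) ≤ 1 / (1 - C) := by
      apply div_le_div_of_nonneg_left (by norm_num) hC1'
      nlinarith
    linarith
  -- covariance bound
  have hI : Indep i h1 := by rw [hh1]; exact indep_of_zc hgood i g2
  have hO : OnlyDep i (Yi i) := onlyDep_Yi i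
  have hcov : |MRT.expect μi (fun y => h1 y * Yi i y)
      - MRT.expect μi h1 * MRT.expect μi (Yi i)| ≤ s / (1 - C) := by
    rw [cov_transfer hsti hI hO]
    refine (cov_cs hDistμi).trans ?_
    have b1 : Real.sqrt (Vv μi (pop Nbr f π' h1)) ≤ Real.sqrt (L / (1 - C)) :=
      Real.sqrt_le_sqrt hV1
    have b2 : Real.sqrt (Vv μi (pop Nbr f π' (Yi i))) ≤ Real.sqrt (1 / (1 - C)) :=
      Real.sqrt_le_sqrt hV2
    calc Real.sqrt (Vv μi (pop Nbr f π' h1)) * Real.sqrt (Vv μi (pop Nbr f π' (Yi i)))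
        ≤ Real.sqrt (L / (1 - C)) * Real.sqrt (1 / (1 - C)) :=
          mul_le_mul b1 b2 (Real.sqrt_nonneg _) (Real.sqrt_nonneg _)
      _ = Real.sqrt (L / (1 - C) * (1 / (1 - C))) :=
          (Real.sqrt_mul (by positivity) _).symm
      _ = Real.sqrt (L * (1 / (1 - C)) ^ 2) := by
          congr 1
          ring
      _ = s * (1 / (1 - C)) := by
          rw [Real.sqrt_mul hL0, Real.sqrt_sq (by positivity), hs]
      _ = s / (1 - C) := by ring
  -- the mean-field identity for X
  have hpopYi : ∀ y, pop Nbr f π' (Yi i) y = h0 y + h1 y * Yi i y := by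
    intro y
    rw [pop_eq, expect_Yi]
    simp only [hh0, hh1, hg1, hg2]
    unfold succProb aF bF cF dF Yi
    rw [hπ'def, Function.update_self]
    cases hyi : y i <;> simp [hyi] <;> ring
  set X := MRT.expect μi (Yi i) with hX
  have hXid : X = MRT.expect μi h0 + MRT.expect μi (fun y => h1 y * Yi i y) := by
    calc X = MRT.expect μi (pop Nbr f π' (Yi i)) := stat_expect hsti (Yi i)
      _ = MRT.expect μi (fun y => h0 y + h1 y * Yi i y) :=
          LDE.expect_congr μi fun y => hpopYi y
      _ = MRT.expect μi h0 + MRT.expect μi (fun y => h1 y * Yi i y) :=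
          expect_add μi h0 (fun y => h1 y * Yi i y)
  set E1 := MRT.expect μ h0 with hE1
  set E1i := MRT.expect μi h0 with hE1i
  set E2 := MRT.expect μ h1 with hE2
  set E2i := MRT.expect μi h1 with hE2i
  set Cov := MRT.expect μi (fun y => h1 y * Yi i y) - E2i * X with hCov
  have hXid2 : X = E1i + Cov + E2i * X := by linarith [hXid]
  -- bounds on X and E2
  have hX0 : 0 ≤ X := by
    rw [hX]
    apply le_expect hDistμi
    intro y
    unfold Yi
    split <;> norm_num
  have hX1 : X ≤ 1 := by
    rw [hX]
    apply expect_le hDistμi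
    intro y
    unfold Yi
    split <;> norm_num
  have habsg2 : ∀ y : State n, |h1 y| ≤ B := by
    intro y
    have hz := zc_nonneg Nbr y i
    have b10 := hBB i false (zc Nbr y i) hz
    have b11 := hBB i true (zc Nbr y i) hz
    have e : h1 y = (1 - γ) * (f i true false (zc Nbr y i) - f i false false (zc Nbr y i))
        + γ * (f i true true (zc Nbr y i) - f i false true (zc Nbr y i)) := by
      simp only [hh1, hg2]
      unfold cF dF
      ring
    rw [e]
    have t1 : |(1 - γ) * (f i true false (zc Nbr y i) - f i false false (zc Nbr y i))|
        ≤ (1 - γ) * B := by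
      rw [abs_mul, abs_of_nonneg (by linarith : (0:ℝ) ≤ 1 - γ)]
      exact mul_le_mul_of_nonneg_left b10 (by linarith)
    have t2 : |γ * (f i true true (zc Nbr y i) - f i false true (zc Nbr y i))| ≤ γ * B := by
      rw [abs_mul, abs_of_nonneg hγ0]
      exact mul_le_mul_of_nonneg_left b11 hγ0
    calc |(1 - γ) * (f i true false (zc Nbr y i) - f i false false (zc Nbr y i))
          + γ * (f i true true (zc Nbr y i) - f i false true (zc Nbr y i))|
        ≤ _ + _ := abs_add_le _ _
      _ ≤ (1 - γ) * B + γ * B := add_le_add t1 t2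
      _ = B := by ring
  have hBC' : B ≤ C := by
    have : (0:ℝ) ≤ (D : ℝ) := Nat.cast_nonneg D
    nlinarith
  have hE2B : E2 ≤ B := by
    rw [hE2]
    exact expect_le hDistμ fun y => le_of_abs_le (habsg2 y)
  have hDen_pos : (0:ℝ) < 1 - E2 := by linarith
  have hDen_ge : 1 - C ≤ 1 - E2 := by linarith
  -- rewrite the target
  have hNumEq : MRT.expect μ (fun y => aF f i (zc Nbr y i) + bF f i (zc Nbr y i) * γ)
      = E1 := by rw [hE1]
  have hDenEq : MRT.expect μ (fun y => 1 - cF f i (zc Nbr y i) - dF f i (zc Nbr y i) * γ)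
      = 1 - E2 := by
    have e : MRT.expect μ (fun y => 1 - cF f i (zc Nbr y i) - dF f i (zc Nbr y i) * γ)
        = MRT.expect μ (fun y => (fun _ => (1:ℝ)) y - h1 y) := by
      apply LDE.expect_congr
      intro y
      simp only [hh1, hg2]
      ring
    rw [e, expect_sub, expect_const hDistμ.2, hE2]
  rw [hDenEq]
  try rw [hNumEq]
  -- final computation
  have hfrac : X - E1 / (1 - E2) = (X * (1 - E2) - E1) / (1 - E2) := by
    field_simp
  have hnum_id : X * (1 - E2) - E1 = (E1i - E1) + Cov + X * (E2i - E2) := by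
    linear_combination hXid2
  have a1 : |E1i - E1| ≤ 2 * s / (1 - C) := by
    rw [hE1i, hE1, abs_sub_comm]
    exact hΔ0
  have a2 : |X * (E2i - E2)| ≤ 2 * s / (1 - C) := by
    rw [abs_mul, abs_of_nonneg hX0]
    calc X * |E2i - E2| ≤ 1 * |E2i - E2| :=
          mul_le_mul_of_nonneg_right hX1 (abs_nonneg _)
      _ = |E2i - E2| := one_mul _
      _ ≤ 2 * s / (1 - C) := by
          rw [hE2i, hE2, abs_sub_comm]
          exact hΔ1
  have a3 : |Cov| ≤ s / (1 - C) := by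
    rw [hCov, hE2i, hX]
    exact hcov
  have hnum_bd : |X * (1 - E2) - E1| ≤ 5 * s / (1 - C) := by
    rw [hnum_id]
    calc |(E1i - E1) + Cov + X * (E2i - E2)|
        ≤ |(E1i - E1) + Cov| + |X * (E2i - E2)| := abs_add_le _ _
      _ ≤ (|E1i - E1| + |Cov|) + |X * (E2i - E2)| :=
          add_le_add_left (abs_add_le _ _) _
      _ ≤ (2 * s / (1 - C) + s / (1 - C)) + 2 * s / (1 - C) := by
          exact add_le_add (add_le_add a1 a3) a2
      _ = 5 * s / (1 - C) := by ring
  rw [hfrac, abs_div, abs_of_pos hDen_pos]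
  calc |X * (1 - E2) - E1| / (1 - E2)
      ≤ (5 * s / (1 - C)) / (1 - C) :=
        div_le_div₀ (by positivity) hnum_bd hC1' hDen_ge
    _ = 5 * s / (1 - C) ^ 2 := by
        rw [div_div]
        ring_nf
    _ ≤ 8 / (1 - C) ^ 2 * s := by
        rw [show (8:ℝ) / (1 - C) ^ 2 * s = 8 * s / (1 - C) ^ 2 by ring]
        apply div_le_div₀ (by positivity) (by linarith) (by positivity) le_rfl
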